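/- arXiv:2501.02596 — 9 statements merged into one kernel-verified Lean document; each statement's English description precedes it below -/
import Mathlib

section
/- Fix k, p, q with τ > q. There is a constant C = C(k, p, q) such that for every n and every intersecting family F ⊆ binomial([n],k) with covering number τ(F) = τ > q, we have β_{p,q}(F) ≤ C · n^{k - p - τ}. -/
/-- A family of finite sets is intersecting if any two members meet. -/
def Intersecting (F : Finset (Finset ℕ)) : Prop :=
  ∀ A ∈ F, ∀ B ∈ F, (A ∩ B).Nonempty

/-- `X` is a cover (transversal) of `F`: it meets every member. -/
def IsCover (F : Finset (Finset ℕ)) (X : Finset ℕ) : Prop :=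
  ∀ A ∈ F, (X ∩ A).Nonempty

/-- `X` is a minimal cover of `F`. -/
def IsMinCover (F : Finset (Finset ℕ)) (X : Finset ℕ) : Prop :=
  IsCover F X ∧ ∀ Y ⊂ X, ¬ IsCover F Y

/-- The covering number `τ(F)`: minimum size of a cover. -/
noncomputable def coverNum (F : Finset (Finset ℕ)) : ℕ :=
  sInf {m | ∃ X : Finset ℕ, X.card = m ∧ IsCover F X}

/-- `F(A, B̄)`: members of `F` containing `A` and disjoint from `B`. -/
def famAB (F : Finset (Finset ℕ)) (A B : Finset ℕ) : Finset (Finset ℕ) :=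
  F.filter fun S => A ⊆ S ∧ Disjoint B S

/-- The `(p,q)`-dömdödöm of `F` with ground set `[n]` (here `Finset.range n`):
the minimum of `|F(A, B̄)|` over disjoint `A, B ⊆ [n]` with `|A| = p`, `|B| = q`. -/
noncomputable def beta (n p q : ℕ) (F : Finset (Finset ℕ)) : ℕ :=
  sInf {m | ∃ A B : Finset ℕ, A ⊆ Finset.range n ∧ B ⊆ Finset.range n ∧
    Disjoint A B ∧ A.card = p ∧ B.card = q ∧ m = (famAB F A B).card}

/-- Branching bound: if every cover of `F` has size at least `τ`, then the number of
members containing a fixed set `A` with `|A| + d = τ` is at most `k^d · C(n, k-τ)`. -/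
lemma branch_bound (k n τ : ℕ) (F : Finset (Finset ℕ))
    (hF : F ⊆ (Finset.range n).powersetCard k) (hint : Intersecting F)
    (hcov : ∀ X : Finset ℕ, IsCover F X → τ ≤ X.card) :
    ∀ d : ℕ, ∀ A : Finset ℕ, A.card + d = τ →
      (F.filter (fun S => A ⊆ S)).card ≤ k ^ d * n.choose (k - τ) := by
  intro d
  induction d with
  | zero =>
    intro A hA
    rw [Nat.add_zero] at hA
    rw [pow_zero, one_mul]
    have hle : (F.filter (fun S => A ⊆ S)).card ≤
        ((Finset.range n).powersetCard (k - τ)).card := by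
      apply Finset.card_le_card_of_injOn (fun S => S \ A)
      · intro S hS
        simp only [Finset.mem_coe] at hS ⊢
        rw [Finset.mem_filter] at hS
        obtain ⟨hSF, hAS⟩ := hS
        have hSp := hF hSF
        rw [Finset.mem_powersetCard] at hSp ⊢
        refine ⟨Finset.sdiff_subset.trans hSp.1, ?_⟩
        rw [Finset.card_sdiff_of_subset hAS, hSp.2, hA]
      · intro S hS T hT hST
        simp only [Finset.coe_filter, Set.mem_setOf_eq] at hS hT
        have h2 := congrArg (· ∪ A) hST
        simpa [Finset.sdiff_union_of_subset hS.2, Finset.sdiff_union_of_subset hT.2] using h2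
    rwa [Finset.card_powersetCard, Finset.card_range] at hle
  | succ d ih =>
    intro A hA
    have hnotcov : ¬ IsCover F A := by
      intro h
      have := hcov A h
      omega
    rw [IsCover] at hnotcov
    push_neg at hnotcov
    obtain ⟨S, hSF, hAS⟩ := hnotcov
    have hASempty : A ∩ S = ∅ := hAS
    have hsub : F.filter (fun M => A ⊆ M) ⊆
        S.biUnion (fun x => F.filter (fun M => insert x A ⊆ M)) := by
      intro M hM
      rw [Finset.mem_filter] at hM
      obtain ⟨hMF, hAM⟩ := hM
      obtain ⟨x, hx⟩ := hint M hMF S hSF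
      rw [Finset.mem_inter] at hx
      refine Finset.mem_biUnion.mpr ⟨x, hx.2, ?_⟩
      rw [Finset.mem_filter]
      exact ⟨hMF, Finset.insert_subset hx.1 hAM⟩
    have hScard : S.card = k := by
      have := hF hSF
      rw [Finset.mem_powersetCard] at this
      exact this.2
    calc (F.filter (fun M => A ⊆ M)).card
        ≤ (S.biUnion (fun x => F.filter (fun M => insert x A ⊆ M))).card :=
          Finset.card_le_card hsub
      _ ≤ ∑ x ∈ S, (F.filter (fun M => insert x A ⊆ M)).card := Finset.card_biUnion_le
      _ ≤ ∑ _x ∈ S, k ^ d * n.choose (k - τ) := by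
          apply Finset.sum_le_sum
          intro x hxS
          apply ih
          have hxA : x ∉ A := by
            intro h
            have : x ∈ A ∩ S := Finset.mem_inter.mpr ⟨h, hxS⟩
            rw [hASempty] at this
            exact absurd this (Finset.notMem_empty x)
          rw [Finset.card_insert_of_notMem hxA]
          omega
      _ = S.card * (k ^ d * n.choose (k - τ)) := by rw [Finset.sum_const, smul_eq_mul]
      _ ≤ k * (k ^ d * n.choose (k - τ)) := by rw [hScard]
      _ = k ^ (d + 1) * n.choose (k - τ) := by ring

/-- For fixed k, p, q and τ > q, there is C = C(k,p,q) with
β_{p,q}(F) ≤ C · n^(k-p-τ) for every intersecting F ⊆ binom([n],k) with τ(F) = τ. -/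
theorem beta_upper_coverNum (k p q τ : ℕ) (hτ : q < τ) :
    ∃ C : ℝ, 0 < C ∧ ∀ n : ℕ, ∀ F : Finset (Finset ℕ),
      F ⊆ (Finset.range n).powersetCard k → Intersecting F → coverNum F = τ →
      (beta n p q F : ℝ) ≤ C * (n : ℝ) ^ ((k : ℤ) - (p : ℤ) - (τ : ℤ)) := by
  classical
  set C : ℝ := (k : ℝ) ^ k * (k.choose p) * (p.factorial) * 2 ^ p
      + (k : ℝ) ^ k * (2 * (p : ℝ)) ^ p + 1 with hCdef
  have hC1 : (k : ℝ) ^ k * (k.choose p) * (p.factorial) * 2 ^ p ≤ C := by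
    have h1 : (0:ℝ) ≤ (k : ℝ) ^ k * (2 * (p : ℝ)) ^ p := by positivity
    rw [hCdef]; linarith
  have hC2 : (k : ℝ) ^ k * (2 * (p : ℝ)) ^ p ≤ C := by
    have h1 : (0:ℝ) ≤ (k : ℝ) ^ k * (k.choose p) * (p.factorial) * 2 ^ p := by positivity
    rw [hCdef]; linarith
  have hCpos : 0 < C := by
    have h1 : (0:ℝ) ≤ (k : ℝ) ^ k * (2 * (p : ℝ)) ^ p := by positivity
    have h2 : (0:ℝ) ≤ (k : ℝ) ^ k * (k.choose p) * (p.factorial) * 2 ^ p := by positivity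
    rw [hCdef]; linarith
  refine ⟨C, hCpos, ?_⟩
  intro n F hF hint hcov
  -- basic facts
  have hcovge : ∀ X : Finset ℕ, IsCover F X → τ ≤ X.card := by
    intro X hX
    have h : coverNum F ≤ X.card := Nat.sInf_le ⟨X, rfl, hX⟩
    rw [hcov] at h
    exact h
  have hFne : F.Nonempty := by
    rcases F.eq_empty_or_nonempty with h | h
    · exfalso
      have h0 : coverNum F ≤ 0 :=
        Nat.sInf_le ⟨∅, Finset.card_empty, fun A hA => by simp [h] at hA⟩
      rw [hcov] at h0
      omega
    · exact h
  obtain ⟨S₀, hS₀F⟩ := hFne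
  have hS₀ := hF hS₀F
  rw [Finset.mem_powersetCard] at hS₀
  have hS₀ne : S₀.Nonempty := by
    have h := hint S₀ hS₀F S₀ hS₀F
    rwa [Finset.inter_self] at h
  have hk1 : 1 ≤ k := by
    have h := Finset.card_pos.mpr hS₀ne
    rw [hS₀.2] at h
    exact h
  have hnk : k ≤ n := by
    have h := Finset.card_le_card hS₀.1
    rwa [hS₀.2, Finset.card_range] at h
  have hτk : τ ≤ k := by
    have hc : IsCover F S₀ := fun M hM => hint S₀ hS₀F M hM
    have h := hcovge S₀ hc
    rw [hS₀.2] at h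
    exact h
  have hn0 : (0:ℝ) < (n:ℝ) := by
    have : 0 < n := by omega
    exact_mod_cast this
  -- the full family bound
  have hFcard : F.card ≤ k ^ τ * n.choose (k - τ) := by
    have h := branch_bound k n τ F hF hint hcovge τ ∅ (by simp)
    rwa [Finset.filter_true_of_mem (fun S _ => Finset.empty_subset S)] at h
  -- rewrite the zpow
  have hzpow : (n : ℝ) ^ ((k : ℤ) - (p : ℤ) - (τ : ℤ)) = (n : ℝ) ^ (k - τ) / (n : ℝ) ^ p := by
    have he : (k : ℤ) - (p : ℤ) - (τ : ℤ) = ((k - τ : ℕ) : ℤ) - (p : ℤ) := by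
      rw [Nat.cast_sub hτk]; ring
    rw [he, zpow_sub₀ hn0.ne', zpow_natCast, zpow_natCast]
  by_cases hn1 : p + q ≤ n
  swap
  · -- no admissible pair (A, B): beta = 0
    have hbeta0 : beta n p q F = 0 := by
      have hempty : {m | ∃ A B : Finset ℕ, A ⊆ Finset.range n ∧ B ⊆ Finset.range n ∧
          Disjoint A B ∧ A.card = p ∧ B.card = q ∧ m = (famAB F A B).card} = ∅ := by
        rw [Set.eq_empty_iff_forall_notMem]
        rintro m ⟨A, B, hA, hB, hdisj, hcA, hcB, -⟩
        have hu : (A ∪ B).card ≤ n := by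
          have h := Finset.card_le_card (Finset.union_subset hA hB)
          rwa [Finset.card_range] at h
        rw [Finset.card_union_of_disjoint hdisj, hcA, hcB] at hu
        omega
      rw [beta, hempty, Nat.sInf_empty]
    rw [hbeta0]
    push_cast
    have : (0:ℝ) < C * (n : ℝ) ^ ((k : ℤ) - (p : ℤ) - (τ : ℤ)) :=
      mul_pos hCpos (zpow_pos hn0 _)
    linarith
  -- main case: choose a minimizing A₀ by averaging, then B
  set P := (Finset.range n).powersetCard p with hPdef
  have hPcard : P.card = n.choose p := by rw [hPdef, Finset.card_powersetCard, Finset.card_range]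
  have hPne : P.Nonempty := by
    rw [← Finset.card_pos, hPcard]
    exact Nat.choose_pos (by omega)
  obtain ⟨A₀, hA₀P, hA₀min⟩ :=
    Finset.exists_min_image P (fun A => (F.filter (fun S => A ⊆ S)).card) hPne
  have hA₀mem := hA₀P
  rw [hPdef, Finset.mem_powersetCard] at hA₀mem
  -- averaging identity
  have hsum : ∑ A ∈ P, (F.filter (fun S => A ⊆ S)).card = F.card * k.choose p := by
    have h1 : ∀ A ∈ P, (F.filter (fun S => A ⊆ S)).card
        = ∑ S ∈ F, (if A ⊆ S then 1 else 0) := fun A _ => Finset.card_filter _ _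
    rw [Finset.sum_congr rfl h1, Finset.sum_comm]
    have h2 : ∀ S ∈ F, (∑ A ∈ P, if A ⊆ S then 1 else 0) = k.choose p := by
      intro S hSmem
      have hSm := hF hSmem
      rw [Finset.mem_powersetCard] at hSm
      rw [← Finset.card_filter]
      have heq : P.filter (fun A => A ⊆ S) = S.powersetCard p := by
        ext A
        rw [Finset.mem_filter, hPdef, Finset.mem_powersetCard, Finset.mem_powersetCard]
        constructor
        · rintro ⟨⟨-, hcard⟩, hAS⟩
          exact ⟨hAS, hcard⟩
        · rintro ⟨hAS, hcard⟩
          exact ⟨⟨hAS.trans hSm.1, hcard⟩, hAS⟩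
      rw [heq, Finset.card_powersetCard, hSm.2]
    rw [Finset.sum_congr rfl h2, Finset.sum_const, smul_eq_mul]
  have havg : n.choose p * (F.filter (fun S => A₀ ⊆ S)).card ≤ F.card * k.choose p := by
    have h := Finset.card_nsmul_le_sum P (fun A => (F.filter (fun S => A ⊆ S)).card)
      ((F.filter (fun S => A₀ ⊆ S)).card) hA₀min
    rw [smul_eq_mul, hPcard, hsum] at h
    exact h
  -- choose B
  have hBex : ∃ B ⊆ Finset.range n \ A₀, B.card = q := by
    apply Finset.exists_subset_card_eq
    rw [Finset.card_sdiff_of_subset hA₀mem.1, Finset.card_range, hA₀mem.2]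
    omega
  obtain ⟨B, hBsub, hBcard⟩ := hBex
  have hBrange : B ⊆ Finset.range n := hBsub.trans Finset.sdiff_subset
  have hdisj : Disjoint A₀ B := Finset.disjoint_left.mpr
    (fun a ha hb => (Finset.mem_sdiff.mp (hBsub hb)).2 ha)
  have hbeta : beta n p q F ≤ (famAB F A₀ B).card :=
    Nat.sInf_le ⟨A₀, B, hA₀mem.1, hBrange, hdisj, hA₀mem.2, hBcard, rfl⟩
  have hfam : (famAB F A₀ B).card ≤ (F.filter (fun S => A₀ ⊆ S)).card := by
    apply Finset.card_le_card
    intro S hS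
    rw [famAB, Finset.mem_filter] at hS
    rw [Finset.mem_filter]
    exact ⟨hS.1, hS.2.1⟩
  -- key ℕ inequality
  have hkey : beta n p q F * n.choose p ≤ k ^ k * n ^ (k - τ) * k.choose p := by
    calc beta n p q F * n.choose p
        ≤ (F.filter (fun S => A₀ ⊆ S)).card * n.choose p :=
          Nat.mul_le_mul_right _ (hbeta.trans hfam)
      _ = n.choose p * (F.filter (fun S => A₀ ⊆ S)).card := Nat.mul_comm _ _
      _ ≤ F.card * k.choose p := havg
      _ ≤ (k ^ τ * n.choose (k - τ)) * k.choose p := Nat.mul_le_mul_right _ hFcard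
      _ ≤ (k ^ k * n ^ (k - τ)) * k.choose p := by
          apply Nat.mul_le_mul_right
          exact Nat.mul_le_mul (Nat.pow_le_pow_right hk1 hτk) (Nat.choose_le_pow n (k - τ))
  have hbetaF : beta n p q F ≤ k ^ k * n ^ (k - τ) := by
    calc beta n p q F ≤ (famAB F A₀ B).card := hbeta
      _ ≤ (F.filter (fun S => A₀ ⊆ S)).card := hfam
      _ ≤ F.card := Finset.card_le_card (Finset.filter_subset _ _)
      _ ≤ k ^ τ * n.choose (k - τ) := hFcard
      _ ≤ k ^ k * n ^ (k - τ) :=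
          Nat.mul_le_mul (Nat.pow_le_pow_right hk1 hτk) (Nat.choose_le_pow n (k - τ))
  -- reduce goal to β * n^p ≤ C * n^(k-τ)
  rw [hzpow, ← mul_div_assoc, le_div_iff₀ (pow_pos hn0 p)]
  by_cases hn2 : 2 * p ≤ n
  · -- big n : use averaging
    have h1 : (beta n p q F : ℝ) * (n.choose p : ℝ)
        ≤ ((k:ℝ) ^ k * (k.choose p : ℝ)) * (n:ℝ) ^ (k - τ) := by
      have := hkey
      have hcast : ((beta n p q F * n.choose p : ℕ) : ℝ)
          ≤ ((k ^ k * n ^ (k - τ) * k.choose p : ℕ) : ℝ) := Nat.cast_le.mpr this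
      push_cast at hcast
      nlinarith [hcast]
    -- lower bound on C(n,p)
    have h2 : (n:ℝ) ^ p ≤ (n.choose p : ℝ) * (2 ^ p * (p.factorial : ℝ)) := by
      have hpc := Nat.pow_le_choose (α := ℝ) p n
      have hhalfN : n ≤ 2 * (n + 1 - p) := by omega
      have hhalf : (n:ℝ) / 2 ≤ ((n + 1 - p : ℕ) : ℝ) := by
        have : (n:ℝ) ≤ 2 * ((n + 1 - p : ℕ) : ℝ) := by exact_mod_cast hhalfN
        linarith
      have hpow : ((n:ℝ) / 2) ^ p ≤ ((n + 1 - p : ℕ) : ℝ) ^ p :=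
        pow_le_pow_left₀ (by positivity) hhalf p
      have hfp : (0:ℝ) < (p.factorial : ℝ) := by exact_mod_cast p.factorial_pos
      have hdiv : ((n:ℝ) / 2) ^ p / (p.factorial : ℝ) ≤ (n.choose p : ℝ) :=
        le_trans (div_le_div_of_nonneg_right hpow hfp.le) hpc
      rw [div_pow] at hdiv
      rw [div_div] at hdiv
      rw [div_le_iff₀ (by positivity)] at hdiv
      linarith [hdiv]
    calc (beta n p q F : ℝ) * (n:ℝ) ^ p
        ≤ (beta n p q F : ℝ) * ((n.choose p : ℝ) * (2 ^ p * (p.factorial : ℝ))) :=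
          mul_le_mul_of_nonneg_left h2 (Nat.cast_nonneg _)
      _ = ((beta n p q F : ℝ) * (n.choose p : ℝ)) * (2 ^ p * (p.factorial : ℝ)) := by ring
      _ ≤ (((k:ℝ) ^ k * (k.choose p : ℝ)) * (n:ℝ) ^ (k - τ)) * (2 ^ p * (p.factorial : ℝ)) := by
          apply mul_le_mul_of_nonneg_right h1
          positivity
      _ = ((k:ℝ) ^ k * (k.choose p : ℝ) * (p.factorial : ℝ) * 2 ^ p) * (n:ℝ) ^ (k - τ) := by
          ring
      _ ≤ C * (n:ℝ) ^ (k - τ) := mul_le_mul_of_nonneg_right hC1 (by positivity)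
  · -- small n : p + q ≤ n < 2p
    have hb : (beta n p q F : ℝ) ≤ (k:ℝ) ^ k * (n:ℝ) ^ (k - τ) := by
      have hcast : ((beta n p q F : ℕ) : ℝ) ≤ ((k ^ k * n ^ (k - τ) : ℕ) : ℝ) :=
        Nat.cast_le.mpr hbetaF
      push_cast at hcast
      exact hcast
    have hnp : (n:ℝ) ^ p ≤ (2 * (p:ℝ)) ^ p := by
      apply pow_le_pow_left₀ (Nat.cast_nonneg n)
      have : n ≤ 2 * p := by omega
      exact_mod_cast this
    calc (beta n p q F : ℝ) * (n:ℝ) ^ p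
        ≤ ((k:ℝ) ^ k * (n:ℝ) ^ (k - τ)) * (2 * (p:ℝ)) ^ p := by
          apply mul_le_mul hb hnp (by positivity) (by positivity)
      _ = ((k:ℝ) ^ k * (2 * (p:ℝ)) ^ p) * (n:ℝ) ^ (k - τ) := by ring
      _ ≤ C * (n:ℝ) ^ (k - τ) := mul_le_mul_of_nonneg_right hC2 (by positivity)
end

section
/- For fixed p, q, k with p + q ≥ k, for all sufficiently large n, every intersecting family F ⊆ binomial([n],k) satisfies β_{p,q}(F) = 0. -/
/-- If there is a witness pair `(A,B)` with `famAB F A B = ∅`, then `beta = 0`. -/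
lemma beta_zero_of_witness (n p q : ℕ) (F : Finset (Finset ℕ)) (A B : Finset ℕ)
    (hA : A ⊆ Finset.range n) (hB : B ⊆ Finset.range n) (hd : Disjoint A B)
    (hca : A.card = p) (hcb : B.card = q) (he : famAB F A B = ∅) :
    beta n p q F = 0 := by
  rw [beta]
  rw [Nat.sInf_eq_zero]
  left
  exact ⟨A, B, hA, hB, hd, hca, hcb, by rw [he, Finset.card_empty]⟩

/-- Frankl-type tree bound: if no set of size `≤ q` covers the intersecting
`k`-uniform family `F` on `range n`, then the number of members containing a
fixed set `A` with `|A| + j = q + 1` is at most `k ^ j * C(n, k - (q+1))`. -/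
lemma tree_bound (n k q : ℕ) (F : Finset (Finset ℕ))
    (hF : F ⊆ (Finset.range n).powersetCard k) (hI : Intersecting F)
    (hnc : ∀ X : Finset ℕ, X.card ≤ q → ¬ IsCover F X) :
    ∀ (j : ℕ) (A : Finset ℕ), A.card + j = q + 1 →
      (F.filter (fun S => A ⊆ S)).card ≤ k ^ j * n.choose (k - (q + 1)) := by
  intro j
  induction j with
  | zero =>
    intro A hA
    simp only [Nat.add_zero] at hA
    rw [pow_zero, one_mul]
    have hinj := Finset.card_le_card_of_injOn (f := fun S => S \ A)
      (s := F.filter (fun S => A ⊆ S)) (t := (Finset.range n).powersetCard (k - (q + 1)))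
      ?_ ?_
    · rw [Finset.card_powersetCard, Finset.card_range] at hinj
      exact hinj
    · intro S hS
      simp only [Finset.mem_coe, Finset.mem_filter] at hS ⊢
      obtain ⟨hSF, hAS⟩ := hS
      have hmem := Finset.mem_powersetCard.mp (hF hSF)
      rw [Finset.mem_powersetCard]
      constructor
      · exact Finset.sdiff_subset.trans hmem.1
      · rw [Finset.card_sdiff_of_subset hAS, hmem.2, hA]
    · intro S hS T hT hST
      simp only [Finset.coe_filter, Set.mem_setOf_eq] at hS hT
      calc S = S \ A ∪ A := (Finset.sdiff_union_of_subset hS.2).symm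
        _ = T \ A ∪ A := by simp only at hST; rw [hST]
        _ = T := Finset.sdiff_union_of_subset hT.2
  | succ j ih =>
    intro A hA
    have hAq : A.card ≤ q := by omega
    have h1 := hnc A hAq
    rw [IsCover] at h1
    push_neg at h1
    obtain ⟨S₀, hS₀F, hS₀⟩ := h1
    have hdisj : ∀ x ∈ S₀, x ∉ A := by
      intro x hx hxA
      exact (Finset.not_nonempty_iff_eq_empty.mpr hS₀) ⟨x, Finset.mem_inter.mpr ⟨hxA, hx⟩⟩
    have hsub : F.filter (fun S => A ⊆ S) ⊆
        S₀.biUnion (fun x => F.filter (fun S => insert x A ⊆ S)) := by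
      intro S hS
      simp only [Finset.mem_filter] at hS
      obtain ⟨hSF, hAS⟩ := hS
      obtain ⟨x, hx⟩ := hI S hSF S₀ hS₀F
      rw [Finset.mem_inter] at hx
      refine Finset.mem_biUnion.mpr ⟨x, hx.2, ?_⟩
      simp only [Finset.mem_filter]
      exact ⟨hSF, Finset.insert_subset hx.1 hAS⟩
    calc (F.filter (fun S => A ⊆ S)).card
        ≤ (S₀.biUnion (fun x => F.filter (fun S => insert x A ⊆ S))).card :=
          Finset.card_le_card hsub
      _ ≤ ∑ x ∈ S₀, (F.filter (fun S => insert x A ⊆ S)).card := Finset.card_biUnion_le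
      _ ≤ ∑ _x ∈ S₀, k ^ j * n.choose (k - (q + 1)) := by
          refine Finset.sum_le_sum ?_
          intro x hx
          refine ih (insert x A) ?_
          rw [Finset.card_insert_of_notMem (hdisj x hx)]
          omega
      _ = S₀.card * (k ^ j * n.choose (k - (q + 1))) := by
          rw [Finset.sum_const, smul_eq_mul]
      _ = k ^ (j + 1) * n.choose (k - (q + 1)) := by
          have hk : S₀.card = k := (Finset.mem_powersetCard.mp (hF hS₀F)).2
          rw [hk, pow_succ]
          ring

/-- The key arithmetic inequality for large `n`. -/
lemma arith_ineq (p q k n : ℕ) (hp : 1 ≤ p) (hk2 : k ≤ p + q)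
    (hn : 2 ^ p * (k ^ (q + 1) * k.choose p) * p.factorial + 2 * p + 2 < n) :
    k ^ (q + 1) * k.choose p * n.choose (k - (q + 1)) < n.choose p := by
  set K := k ^ (q + 1) * k.choose p with hK
  have hn1 : 1 ≤ n := by omega
  have c1 : n.choose (k - (q + 1)) ≤ n ^ (k - (q + 1)) := Nat.choose_le_pow n (k - (q + 1))
  have c2 : n ^ (k - (q + 1)) ≤ n ^ (p - 1) :=
    Nat.pow_le_pow_right hn1 (by omega)
  have h2 : n ^ p ≤ (2 * (n + 1 - p)) ^ p := Nat.pow_le_pow_left (by omega) p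
  have h3 : (n + 1 - p) ^ p ≤ n.descFactorial p := Nat.pow_sub_le_descFactorial n p
  have hnp : n * n ^ (p - 1) = n ^ p := by
    rw [mul_comm, ← pow_succ]
    congr 1
    omega
  have key : 2 ^ p * (p.factorial * (K * n ^ (p - 1))) < 2 ^ p * ((n + 1 - p) ^ p) := by
    calc 2 ^ p * (p.factorial * (K * n ^ (p - 1)))
        = (2 ^ p * K * p.factorial) * n ^ (p - 1) := by ring
      _ < n * n ^ (p - 1) := by
          apply mul_lt_mul_of_pos_right _ (pow_pos (by omega : 0 < n) (p - 1))
          omega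
      _ = n ^ p := hnp
      _ ≤ (2 * (n + 1 - p)) ^ p := h2
      _ = 2 ^ p * ((n + 1 - p) ^ p) := by rw [mul_pow]
  have key2 : p.factorial * (K * n ^ (p - 1)) < (n + 1 - p) ^ p :=
    Nat.lt_of_mul_lt_mul_left key
  have key3 : p.factorial * (K * n ^ (p - 1)) < p.factorial * n.choose p := by
    calc p.factorial * (K * n ^ (p - 1)) < (n + 1 - p) ^ p := key2
      _ ≤ n.descFactorial p := h3
      _ = p.factorial * n.choose p := Nat.descFactorial_eq_factorial_mul_choose n p
  have key4 : K * n ^ (p - 1) < n.choose p := Nat.lt_of_mul_lt_mul_left key3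
  calc K * n.choose (k - (q + 1)) ≤ K * n ^ (p - 1) :=
        Nat.mul_le_mul_left K (c1.trans c2)
    _ < n.choose p := key4

/-- If p + q ≥ k, then for all large n every intersecting F ⊆ binom([n],k)
has β_{p,q}(F) = 0. -/
theorem beta_eq_zero_of_large_pq (p q k : ℕ) (h : k ≤ p + q) :
    ∃ n₀ : ℕ, ∀ n ≥ n₀, ∀ F : Finset (Finset ℕ),
      F ⊆ (Finset.range n).powersetCard k → Intersecting F →
      beta n p q F = 0 := by
  refine ⟨2 ^ p * (k ^ (q + 1) * k.choose p) * p.factorial + 2 * p + q + k + 3, ?_⟩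
  intro n hn F hF hI
  have hn' : p + q + 1 ≤ n := by omega
  by_cases hcov : ∃ X : Finset ℕ, X ⊆ Finset.range n ∧ X.card ≤ q ∧ IsCover F X
  · -- a small cover exists: put it inside B
    obtain ⟨X, hXr, hXq, hXc⟩ := hcov
    obtain ⟨B, hXB, hBr, hBcard⟩ := Finset.exists_subsuperset_card_eq hXr hXq
      (by rw [Finset.card_range]; omega)
    obtain ⟨A, hAsub, hAcard⟩ := Finset.exists_subset_card_eq
      (show p ≤ (Finset.range n \ B).card by
        rw [Finset.card_sdiff_of_subset hBr, Finset.card_range, hBcard]; omega)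
    have hAr : A ⊆ Finset.range n := hAsub.trans Finset.sdiff_subset
    have hdisj : Disjoint A B := Finset.disjoint_left.mpr
      (fun a ha hb => (Finset.mem_sdiff.mp (hAsub ha)).2 hb)
    refine beta_zero_of_witness n p q F A B hAr hBr hdisj hAcard hBcard ?_
    rw [famAB, Finset.filter_eq_empty_iff]
    intro S hS
    rintro ⟨-, hBS⟩
    obtain ⟨x, hx⟩ := hXc S hS
    rw [Finset.mem_inter] at hx
    exact (Finset.disjoint_left.mp hBS (hXB hx.1)) hx.2
  · -- no small cover: find a p-set contained in no member
    push_neg at hcov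
    have hnc : ∀ X : Finset ℕ, X.card ≤ q → ¬ IsCover F X := by
      intro X hXq hXc
      refine hcov (X ∩ Finset.range n) Finset.inter_subset_right
        (le_trans (Finset.card_le_card Finset.inter_subset_left) hXq) ?_
      intro S hS
      obtain ⟨x, hx⟩ := hXc S hS
      rw [Finset.mem_inter] at hx
      have hSr : S ⊆ Finset.range n := (Finset.mem_powersetCard.mp (hF hS)).1
      exact ⟨x, Finset.mem_inter.mpr ⟨Finset.mem_inter.mpr ⟨hx.1, hSr hx.2⟩, hx.2⟩⟩
    have hFne : F.Nonempty := by
      by_contra hne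
      rw [Finset.not_nonempty_iff_eq_empty] at hne
      refine hnc ∅ (by simp) ?_
      intro S hS
      rw [hne] at hS
      simp at hS
    obtain ⟨S₀, hS₀⟩ := hFne
    have hS₀k : S₀.card = k := (Finset.mem_powersetCard.mp (hF hS₀)).2
    have hqk : q + 1 ≤ k := by
      by_contra hlt
      refine hnc S₀ (by omega) ?_
      intro S hS
      rw [Finset.inter_comm]
      exact hI S hS S₀ hS₀
    have hp1 : 1 ≤ p := by omega
    have htree : F.card ≤ k ^ (q + 1) * n.choose (k - (q + 1)) := by
      have ht := tree_bound n k q F hF hI hnc (q + 1) ∅ (by simp)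
      rwa [Finset.filter_true_of_mem (fun S _ => Finset.empty_subset S)] at ht
    have hexA : ∃ A ∈ (Finset.range n).powersetCard p, ∀ S ∈ F, ¬ A ⊆ S := by
      by_contra hno
      push_neg at hno
      have hsub : (Finset.range n).powersetCard p ⊆
          F.biUnion (fun S => S.powersetCard p) := by
        intro A hA
        obtain ⟨S, hSF, hAS⟩ := hno A hA
        exact Finset.mem_biUnion.mpr ⟨S, hSF,
          Finset.mem_powersetCard.mpr ⟨hAS, (Finset.mem_powersetCard.mp hA).2⟩⟩
      have hcount : n.choose p ≤ F.card * k.choose p := by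
        calc n.choose p = ((Finset.range n).powersetCard p).card := by
              rw [Finset.card_powersetCard, Finset.card_range]
          _ ≤ (F.biUnion fun S => S.powersetCard p).card := Finset.card_le_card hsub
          _ ≤ ∑ S ∈ F, (S.powersetCard p).card := Finset.card_biUnion_le
          _ = ∑ _S ∈ F, k.choose p := by
              refine Finset.sum_congr rfl fun S hS => ?_
              rw [Finset.card_powersetCard, (Finset.mem_powersetCard.mp (hF hS)).2]
          _ = F.card * k.choose p := by rw [Finset.sum_const, smul_eq_mul]
      have harith := arith_ineq p q k n hp1 h (by omega)
      have hfin : n.choose p ≤ k ^ (q + 1) * k.choose p * n.choose (k - (q + 1)) := by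
        calc n.choose p ≤ F.card * k.choose p := hcount
          _ ≤ (k ^ (q + 1) * n.choose (k - (q + 1))) * k.choose p :=
              Nat.mul_le_mul_right _ htree
          _ = k ^ (q + 1) * k.choose p * n.choose (k - (q + 1)) := by ring
      exact Nat.lt_irrefl _ (lt_of_le_of_lt hfin harith)
    obtain ⟨A, hApc, hAfree⟩ := hexA
    obtain ⟨hAr, hAcard⟩ := Finset.mem_powersetCard.mp hApc
    obtain ⟨B, hBsub, hBcard⟩ := Finset.exists_subset_card_eq
      (show q ≤ (Finset.range n \ A).card by
        rw [Finset.card_sdiff_of_subset hAr, Finset.card_range, hAcard]; omega)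
    have hBr : B ⊆ Finset.range n := hBsub.trans Finset.sdiff_subset
    have hdisj : Disjoint A B := Finset.disjoint_right.mpr
      (fun b hb ha => (Finset.mem_sdiff.mp (hBsub hb)).2 ha)
    refine beta_zero_of_witness n p q F A B hAr hBr hdisj hAcard hBcard ?_
    rw [famAB, Finset.filter_eq_empty_iff]
    intro S hS
    rintro ⟨hAS, -⟩
    exact hAfree S hS hAS
end

section
/- Fix p, q, k with p + q < k. There exist constants c, C > 0 such that for all sufficiently large n: (i) there exists an intersecting family F ⊆ binomial([n],k) with β_{p,q}(F) ≥ c · n^{k-1-p-q}, and (ii) every intersecting family F ⊆ binomial([n],k) satisfies β_{p,q}(F) ≤ C · n^{k-1-p-q}. -/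
open Finset


open Finset in
lemma count_contains (n k' : ℕ) (D : Finset ℕ) :
    ((((Finset.range n).powersetCard k').filter (fun S => D ⊆ S)).card) ≤ n ^ (k' - D.card) := by
  classical
  have hinj : Set.InjOn (fun S => S \ D)
      ↑(((Finset.range n).powersetCard k').filter (fun S => D ⊆ S)) := by
    intro S hS T hT hST
    simp only [coe_filter, Set.mem_setOf_eq, mem_coe, mem_filter] at hS hT
    have := congrArg (fun X => X ∪ D) hST
    simpa [sdiff_union_of_subset hS.2, sdiff_union_of_subset hT.2] using this
  have hmaps : ∀ S ∈ (((Finset.range n).powersetCard k').filter (fun S => D ⊆ S)),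
      S \ D ∈ (Finset.range n).powersetCard (k' - D.card) := by
    intro S hS
    simp only [mem_filter, mem_powersetCard] at hS ⊢
    exact ⟨(sdiff_subset).trans hS.1.1, by rw [card_sdiff_of_subset hS.2, hS.1.2]⟩
  calc (((Finset.range n).powersetCard k').filter (fun S => D ⊆ S)).card
      ≤ ((Finset.range n).powersetCard (k' - D.card)).card :=
        Finset.card_le_card_of_injOn _ hmaps hinj
    _ = n.choose (k' - D.card) := by rw [card_powersetCard, card_range]
    _ ≤ n ^ (k' - D.card) := Nat.choose_le_pow _ _

/-- recursive size bound for the witness set `W`. -/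
def gW (k : ℕ) : ℕ → ℕ
  | 0 => k
  | (i+1) => gW k i + (gW k i).choose (i+1) * k

lemma exists_W (F : Finset (Finset ℕ)) (k q : ℕ) (hk : ∀ S ∈ F, S.card = k)
    (hF : Intersecting F)
    (hnc : ∀ Z : Finset ℕ, Z.card ≤ q → ∃ S, S ∈ F ∧ Z ∩ S = ∅) :
    ∃ W : Finset ℕ, W.card ≤ gW k q ∧ ∀ S ∈ F, q + 1 ≤ (S ∩ W).card := by
  classical
  suffices H : ∀ i, i ≤ q → ∃ W : Finset ℕ, W.card ≤ gW k i ∧ ∀ S ∈ F, i + 1 ≤ (S ∩ W).card from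
    H q le_rfl
  intro i
  induction i with
  | zero =>
    intro _
    obtain ⟨S₀, hS₀, -⟩ := hnc ∅ (by simp)
    refine ⟨S₀, by simp [gW, hk S₀ hS₀], fun S hS => ?_⟩
    have := hF S hS S₀ hS₀
    simpa [Nat.succ_le_iff, Finset.card_pos] using this
  | succ i ih =>
    intro hiq
    obtain ⟨W, hWcard, hW⟩ := ih (Nat.le_of_succ_le hiq)
    -- choice of a member avoiding each (i+1)-subset of W
    have hch : ∀ σ ∈ W.powersetCard (i+1), ∃ S, S ∈ F ∧ σ ∩ S = ∅ := by
      intro σ hσ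
      rw [mem_powersetCard] at hσ
      exact hnc σ (by omega)
    choose T hTF hTσ using hch
    set W' := W ∪ (W.powersetCard (i+1)).attach.biUnion
      (fun σ => T σ.1 σ.2) with hW'def
    refine ⟨W', ?_, ?_⟩
    · have h1 : ((W.powersetCard (i+1)).attach.biUnion (fun σ => T σ.1 σ.2)).card
          ≤ (W.card).choose (i+1) * k := by
        calc ((W.powersetCard (i+1)).attach.biUnion (fun σ => T σ.1 σ.2)).card
            ≤ ∑ σ ∈ (W.powersetCard (i+1)).attach, (T σ.1 σ.2).card :=
              card_biUnion_le
          _ = ∑ σ ∈ (W.powersetCard (i+1)).attach, k := by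
              refine Finset.sum_congr rfl fun σ _ => hk _ (hTF σ.1 σ.2)
          _ = (W.powersetCard (i+1)).card * k := by
              rw [Finset.sum_const, card_attach, smul_eq_mul]
          _ = (W.card).choose (i+1) * k := by rw [card_powersetCard]
      have h2 : (W.card).choose (i+1) ≤ (gW k i).choose (i+1) :=
        Nat.choose_mono _ hWcard
      calc W'.card ≤ W.card + ((W.powersetCard (i+1)).attach.biUnion
            (fun σ => T σ.1 σ.2)).card := card_union_le _ _
        _ ≤ gW k i + (gW k i).choose (i+1) * k := by
            have := Nat.mul_le_mul_right k h2
            omega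
        _ = gW k (i+1) := rfl
    · intro S hS
      have hi := hW S hS
      rcases Nat.lt_or_ge (i+1) ((S ∩ W).card) with hlt | hge
      · have : (S ∩ W).card ≤ (S ∩ W').card :=
          card_le_card (inter_subset_inter (le_refl S) subset_union_left)
        omega
      · have hcard : (S ∩ W).card = i + 1 := le_antisymm hge hi
        have hσmem : S ∩ W ∈ W.powersetCard (i+1) :=
          mem_powersetCard.mpr ⟨inter_subset_right, hcard⟩
        obtain ⟨y, hy⟩ := hF S hS (T _ hσmem) (hTF _ hσmem)
        rw [mem_inter] at hy
        have hyW : y ∉ W := by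
          intro hyW
          have : y ∈ (S ∩ W) ∩ T _ hσmem := by
            simp [mem_inter, hy.1, hy.2, hyW]
          rw [hTσ _ hσmem] at this
          exact absurd this (notMem_empty y)
        have hyW' : y ∈ W' := by
          rw [hW'def, mem_union]
          right
          rw [mem_biUnion]
          exact ⟨⟨_, hσmem⟩, mem_attach _ _, hy.2⟩
        have hins : insert y (S ∩ W) ⊆ S ∩ W' := by
          intro x hx
          rcases mem_insert.mp hx with rfl | hx
          · exact mem_inter.mpr ⟨hy.1, hyW'⟩
          · rw [mem_inter] at hx ⊢
            exact ⟨hx.1, subset_union_left hx.2⟩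
        have hnot : y ∉ S ∩ W := fun hc => hyW (mem_inter.mp hc).2
        have := card_le_card hins
        rw [card_insert_of_notMem hnot, hcard] at this
        omega

open Finset in
/-- the construction: all k-subsets of [n] containing a majority of `range (2q+1)`. -/
def Fcon (n q k : ℕ) : Finset (Finset ℕ) :=
  ((Finset.range n).powersetCard k).filter (fun S => q + 1 ≤ (S ∩ Finset.range (2*q+1)).card)

lemma Fcon_subset (n q k : ℕ) : Fcon n q k ⊆ (Finset.range n).powersetCard k :=
  filter_subset _ _

lemma Fcon_intersecting (n q k : ℕ) : Intersecting (Fcon n q k) := by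
  intro S hS T hT
  rw [Fcon, mem_filter] at hS hT
  by_contra hcon
  rw [not_nonempty_iff_eq_empty] at hcon
  have hdisj : Disjoint (S ∩ Finset.range (2*q+1)) (T ∩ Finset.range (2*q+1)) := by
    refine disjoint_left.mpr fun x hx hx2 => ?_
    rw [mem_inter] at hx hx2
    have : x ∈ S ∩ T := mem_inter.mpr ⟨hx.1, hx2.1⟩
    rw [hcon] at this
    exact notMem_empty x this
  have hsub : (S ∩ Finset.range (2*q+1)) ∪ (T ∩ Finset.range (2*q+1)) ⊆ Finset.range (2*q+1) :=
    union_subset inter_subset_right inter_subset_right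
  have := card_le_card hsub
  rw [card_union_of_disjoint hdisj, card_range] at this
  omega

lemma Fcon_famAB_lower (p q k n : ℕ) (h : p + q < k) (hn : 2*(p + 4*q + 3 + k) ≤ n)
    (A B : Finset ℕ) (hA : A ⊆ Finset.range n) (hB : B ⊆ Finset.range n)
    (hAB : Disjoint A B) (hAcard : A.card = p) (hBcard : B.card = q) :
    (n - (p + 4*q + 3)).choose (k - 1 - p - q) ≤ (famAB (Fcon n q k) A B).card := by
  classical
  set D := Finset.range (2*q+1) with hD
  set a := (A ∩ D).card with ha
  set t := (q + 1) - a with ht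
  -- E₀ : t fresh elements of D
  have hDsplit : (D \ (A ∪ B)).card + a + q ≥ 2*q+1 := by
    have hsub : D ⊆ (D \ (A ∪ B)) ∪ (A ∩ D) ∪ (B ∩ D) := by
      intro x hx
      by_cases hxA : x ∈ A
      · exact mem_union_left _ (mem_union_right _ (mem_inter.mpr ⟨hxA, hx⟩))
      · by_cases hxB : x ∈ B
        · exact mem_union_right _ (mem_inter.mpr ⟨hxB, hx⟩)
        · exact mem_union_left _ (mem_union_left _ (mem_sdiff.mpr ⟨hx, by simp [hxA, hxB]⟩))
    have h1 := card_le_card hsub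
    have h2 := card_union_le ((D \ (A ∪ B)) ∪ (A ∩ D)) (B ∩ D)
    have h3 := card_union_le (D \ (A ∪ B)) (A ∩ D)
    have h4 : (B ∩ D).card ≤ q := hBcard ▸ card_le_card inter_subset_left
    have h5 : D.card = 2*q+1 := card_range _
    omega
  have hE0 : t ≤ (D \ (A ∪ B)).card := by omega
  obtain ⟨E₀, hE₀sub, hE₀card⟩ := Finset.exists_subset_card_eq hE0
  -- E₁ : (q+1-t) fresh elements outside D ∪ A ∪ B
  have hVcard : ∀ u : Finset ℕ, u.card + ((Finset.range n) \ u).card ≥ n := by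
    intro u
    have := Finset.card_le_card_sdiff_add_card (s := Finset.range n) (t := u)
    rw [card_range] at this
    omega
  have hE1 : (q+1) - t ≤ ((Finset.range n) \ (D ∪ A ∪ B)).card := by
    have := hVcard (D ∪ A ∪ B)
    have h2 := card_union_le (D ∪ A) B
    have h3 := card_union_le D A
    have h5 : D.card = 2*q+1 := card_range _
    omega
  obtain ⟨E₁, hE₁sub, hE₁card⟩ := Finset.exists_subset_card_eq hE1
  -- the free part
  set V := (Finset.range n) \ (D ∪ A ∪ B ∪ E₁) with hV
  set e := k - 1 - p - q with he
  have hVbig : n - (p + 4*q + 3) ≤ V.card := by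
    have := hVcard (D ∪ A ∪ B ∪ E₁)
    have h2 := card_union_le (D ∪ A ∪ B) E₁
    have h3 := card_union_le (D ∪ A) B
    have h4 := card_union_le D A
    have h5 : D.card = 2*q+1 := card_range _
    have h6 : E₁.card ≤ q + 1 := by omega
    have h7 : A.card = p := hAcard
    have h8 : B.card = q := hBcard
    have h9 : (Finset.range n \ (D ∪ A ∪ B ∪ E₁)).card = V.card := by rw [hV]
    omega
  -- the injection R ↦ A ∪ E₀ ∪ E₁ ∪ R
  set X := A ∪ E₀ ∪ E₁ with hX
  have hE₀D : E₀ ⊆ D := hE₀sub.trans sdiff_subset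
  have hta : t ≤ q + 1 := by omega
  have hdXA_E₀ : Disjoint A E₀ := disjoint_right.mpr fun x hx hx2 =>
    (mem_sdiff.mp (hE₀sub hx)).2 (mem_union_left _ hx2)
  have hdA_E₁ : Disjoint A E₁ := disjoint_right.mpr fun x hx hx2 =>
    (mem_sdiff.mp (hE₁sub hx)).2 (mem_union_left _ (mem_union_right _ hx2))
  have hdE₀_E₁ : Disjoint E₀ E₁ := disjoint_right.mpr fun x hx hx2 =>
    (mem_sdiff.mp (hE₁sub hx)).2 (mem_union_left _ (mem_union_left _ (hE₀D hx2)))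
  have hdX_V : Disjoint X V := by
    rw [hX]
    refine disjoint_left.mpr fun x hx hx2 => ?_
    have := (mem_sdiff.mp hx2).2
    rcases mem_union.mp hx with hx' | hx'
    · rcases mem_union.mp hx' with h'' | h''
      · exact this (mem_union_left _ (mem_union_left _ (mem_union_right _ h'')))
      · exact this (mem_union_left _ (mem_union_left _ (mem_union_left _ (hE₀D h''))))
    · exact this (mem_union_right _ hx')
  have hXcard : X.card = p + (q+1) := by
    rw [hX, card_union_of_disjoint, card_union_of_disjoint hdXA_E₀]
    · rw [hAcard, hE₀card, hE₁card]; omega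
    · rw [disjoint_union_left]; exact ⟨hdA_E₁, hdE₀_E₁⟩
  have hmaps : ∀ R ∈ V.powersetCard e, X ∪ R ∈ famAB (Fcon n q k) A B := by
    intro R hR
    rw [mem_powersetCard] at hR
    have hdX_R : Disjoint X R := hdX_V.mono_right hR.1
    have hcard : (X ∪ R).card = k := by
      rw [card_union_of_disjoint hdX_R, hXcard, hR.2]; omega
    have hsubn : X ∪ R ⊆ Finset.range n := by
      refine union_subset (union_subset (union_subset hA ?_) ?_) ?_
      · exact hE₀D.trans (by rw [hD]; exact Finset.range_subset_range.mpr (by omega))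
      · exact hE₁sub.trans sdiff_subset
      · exact hR.1.trans sdiff_subset
    have hmaj : q + 1 ≤ ((X ∪ R) ∩ D).card := by
      have hsub2 : (A ∩ D) ∪ E₀ ⊆ (X ∪ R) ∩ D := by
        intro x hx
        rcases mem_union.mp hx with hx' | hx'
        · rw [mem_inter] at hx' ⊢
          exact ⟨mem_union_left _ (mem_union_left _ (mem_union_left _ hx'.1)), hx'.2⟩
        · exact mem_inter.mpr ⟨mem_union_left _ (mem_union_left _ (mem_union_right _ hx')),
            hE₀D hx'⟩
      have hd : Disjoint (A ∩ D) E₀ := hdXA_E₀.mono_left inter_subset_left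
      have := card_le_card hsub2
      rw [card_union_of_disjoint hd, hE₀card] at this
      omega
    rw [famAB, mem_filter, Fcon, mem_filter, mem_powersetCard]
    refine ⟨⟨⟨hsubn, hcard⟩, hmaj⟩, ?_, ?_⟩
    · exact fun x hx => mem_union_left _ (mem_union_left _ (mem_union_left _ hx))
    · rw [disjoint_union_right, hX, disjoint_union_right, disjoint_union_right]
      refine ⟨⟨⟨hAB.symm, ?_⟩, ?_⟩, ?_⟩
      · exact disjoint_right.mpr fun x hx hx2 =>
          (mem_sdiff.mp (hE₀sub hx)).2 (mem_union_right _ hx2)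
      · exact disjoint_right.mpr fun x hx hx2 =>
          (mem_sdiff.mp (hE₁sub hx)).2 (mem_union_right _ hx2)
      · exact disjoint_right.mpr fun x hx hx2 =>
          (mem_sdiff.mp (hR.1 hx)).2 (mem_union_left _ (mem_union_right _ hx2))
  have hinj : Set.InjOn (fun R => X ∪ R) ↑(V.powersetCard e) := by
    intro R hR R' hR' hRR'
    simp only [mem_coe, mem_powersetCard] at hR hR'
    have h1 : Disjoint X R := hdX_V.mono_right hR.1
    have h2 : Disjoint X R' := hdX_V.mono_right hR'.1
    have := congrArg (fun Y => Y \ X) hRR'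
    simpa [union_sdiff_cancel_left h1, union_sdiff_cancel_left h2] using this
  calc (n - (p + 4*q + 3)).choose e ≤ (V.card).choose e := Nat.choose_mono _ hVbig
    _ = (V.powersetCard e).card := (card_powersetCard _ _).symm
    _ = ((V.powersetCard e).image (fun R => X ∪ R)).card :=
        (Finset.card_image_of_injOn hinj).symm
    _ ≤ (famAB (Fcon n q k) A B).card := by
        refine card_le_card fun S hS => ?_
        obtain ⟨R, hR, rfl⟩ := Finset.mem_image.mp hS
        exact hmaps R hR

open Finset in
lemma upper_bound (p q k n : ℕ) (h : p + q < k) (hn : gW k q + p + q + 1 ≤ n)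
    (F : Finset (Finset ℕ)) (hFsub : F ⊆ (Finset.range n).powersetCard k)
    (hF : Intersecting F) :
    beta n p q F ≤ (gW k q).choose (q+1) * n ^ (k - 1 - p - q) := by
  classical
  have hk : ∀ S ∈ F, S.card = k := fun S hS => (mem_powersetCard.mp (hFsub hS)).2
  have hsub : ∀ S ∈ F, S ⊆ Finset.range n := fun S hS => (mem_powersetCard.mp (hFsub hS)).1
  by_cases hcov : ∃ Z : Finset ℕ, Z.card ≤ q ∧ IsCover F Z
  · -- a small cover exists: beta = 0
    obtain ⟨Z, hZq, hZcov⟩ := hcov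
    set Z' := Z ∩ Finset.range n with hZ'
    have hZ'cov : IsCover F Z' := by
      intro S hS
      obtain ⟨x, hx⟩ := hZcov S hS
      rw [mem_inter] at hx
      exact ⟨x, by simp [hZ', mem_inter, hx.1, hx.2, hsub S hS hx.2]⟩
    have hZ'card : Z'.card ≤ q := le_trans (card_le_card inter_subset_left) hZq
    -- extend Z' to B of card q inside range n
    have hbig : q - Z'.card ≤ ((Finset.range n) \ Z').card := by
      have h1 : ((Finset.range n) \ Z').card = n - Z'.card := by
        rw [card_sdiff_of_subset (by simp [hZ']), card_range]
      omega
    obtain ⟨B₂, hB₂sub, hB₂card⟩ := Finset.exists_subset_card_eq hbig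
    set B := Z' ∪ B₂ with hBdef
    have hBsub : B ⊆ Finset.range n := union_subset inter_subset_right
      (hB₂sub.trans sdiff_subset)
    have hdisjZB : Disjoint Z' B₂ := by
      refine disjoint_left.mpr fun x hx hx2 => ?_
      exact (mem_sdiff.mp (hB₂sub hx2)).2 hx
    have hBcard : B.card = q := by
      rw [hBdef, card_union_of_disjoint hdisjZB, hB₂card]
      omega
    have hbig2 : p ≤ ((Finset.range n) \ B).card := by
      have h1 : ((Finset.range n) \ B).card = n - B.card := by
        rw [card_sdiff_of_subset hBsub, card_range]
      omega
    obtain ⟨A, hAsub, hAcard⟩ := Finset.exists_subset_card_eq hbig2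
    have hAB : Disjoint A B := disjoint_left.mpr fun x hx hx2 =>
      (mem_sdiff.mp (hAsub hx)).2 hx2
    have hempty : famAB F A B = ∅ := by
      rw [Finset.eq_empty_iff_forall_notMem]
      intro S hS
      rw [famAB, mem_filter] at hS
      obtain ⟨x, hx⟩ := hZ'cov S hS.1
      rw [mem_inter] at hx
      exact (disjoint_left.mp hS.2.2) (mem_union_left _ hx.1) hx.2
    have : beta n p q F ≤ 0 := Nat.sInf_le
      ⟨A, B, hAsub.trans sdiff_subset, hBsub, hAB, hAcard, hBcard, by simp [hempty]⟩
    omega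
  · -- no small cover: build W
    push_neg at hcov
    have hnc : ∀ Z : Finset ℕ, Z.card ≤ q → ∃ S, S ∈ F ∧ Z ∩ S = ∅ := by
      intro Z hZ
      have := hcov Z hZ
      rw [IsCover] at this
      push_neg at this
      obtain ⟨S, hS, hSne⟩ := this
      exact ⟨S, hS, hSne⟩
    obtain ⟨W, hWcard, hW⟩ := exists_W F k q hk hF hnc
    -- pick A, B disjoint from W
    have hbigA : p ≤ ((Finset.range n) \ W).card := by
      have := Finset.card_le_card_sdiff_add_card (s := Finset.range n) (t := W)
      rw [card_range] at this
      omega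
    obtain ⟨A, hAsub, hAcard⟩ := Finset.exists_subset_card_eq hbigA
    have hbigB : q ≤ (((Finset.range n) \ W) \ A).card := by
      have h2 := Finset.card_le_card_sdiff_add_card (s := (Finset.range n) \ W) (t := A)
      have h1 : ((Finset.range n) \ W).card ≥ n - W.card := by
        have := Finset.card_le_card_sdiff_add_card (s := Finset.range n) (t := W)
        rw [card_range] at this
        omega
      omega
    obtain ⟨B, hBsub, hBcard⟩ := Finset.exists_subset_card_eq hbigB
    have hAB : Disjoint A B := disjoint_right.mpr fun x hx hx2 =>
      (mem_sdiff.mp (hBsub hx)).2 hx2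
    have hAW : Disjoint A W := disjoint_left.mpr fun x hx hx2 =>
      (mem_sdiff.mp (hAsub hx)).2 hx2
    have hle : beta n p q F ≤ (famAB F A B).card := Nat.sInf_le
      ⟨A, B, hAsub.trans sdiff_subset, hBsub.trans (sdiff_subset.trans sdiff_subset),
        hAB, hAcard, hBcard, rfl⟩
    refine hle.trans ?_
    -- famAB ⊆ biUnion over (q+1)-subsets of W
    have hsubset : famAB F A B ⊆ (W.powersetCard (q+1)).biUnion
        (fun U => ((Finset.range n).powersetCard k).filter (fun S => A ∪ U ⊆ S)) := by
      intro S hS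
      rw [famAB, mem_filter] at hS
      have hSW : q + 1 ≤ (S ∩ W).card := hW S hS.1
      obtain ⟨U, hUsub, hUcard⟩ := Finset.exists_subset_card_eq hSW
      rw [mem_biUnion]
      refine ⟨U, mem_powersetCard.mpr ⟨hUsub.trans inter_subset_right, hUcard⟩, ?_⟩
      rw [mem_filter]
      exact ⟨hFsub hS.1, union_subset hS.2.1 (hUsub.trans inter_subset_left)⟩
    refine (card_le_card hsubset).trans ?_
    refine (card_biUnion_le).trans ?_
    have hbound : ∀ U ∈ W.powersetCard (q+1),
        (((Finset.range n).powersetCard k).filter (fun S => A ∪ U ⊆ S)).card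
          ≤ n ^ (k - 1 - p - q) := by
      intro U hU
      rw [mem_powersetCard] at hU
      have hdisjAU : Disjoint A U := hAW.mono_right hU.1
      have hcardAU : (A ∪ U).card = p + (q+1) := by
        rw [card_union_of_disjoint hdisjAU, hAcard, hU.2]
      have := count_contains n k (A ∪ U)
      rw [hcardAU] at this
      have hexp : k - (p + (q+1)) = k - 1 - p - q := by omega
      rwa [hexp] at this
    calc ∑ U ∈ W.powersetCard (q+1),
          (((Finset.range n).powersetCard k).filter (fun S => A ∪ U ⊆ S)).card
        ≤ ∑ _U ∈ W.powersetCard (q+1), n ^ (k - 1 - p - q) :=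
          Finset.sum_le_sum hbound
      _ = (W.powersetCard (q+1)).card * n ^ (k - 1 - p - q) := by
          rw [Finset.sum_const, smul_eq_mul]
      _ ≤ (gW k q).choose (q+1) * n ^ (k - 1 - p - q) := by
          rw [card_powersetCard]
          exact Nat.mul_le_mul_right _ (Nat.choose_mono _ hWcard)

/-- If p + q < k then β_{p,q}(n,k) = Θ(n^(k-1-p-q)). -/
theorem beta_order_of_magnitude (p q k : ℕ) (h : p + q < k) :
    ∃ c C : ℝ, 0 < c ∧ 0 < C ∧ ∃ n₀ : ℕ, ∀ n ≥ n₀,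
      (∃ F : Finset (Finset ℕ), F ⊆ (Finset.range n).powersetCard k ∧ Intersecting F ∧
        c * (n : ℝ) ^ (k - 1 - p - q) ≤ (beta n p q F : ℝ)) ∧
      (∀ F : Finset (Finset ℕ), F ⊆ (Finset.range n).powersetCard k → Intersecting F →
        (beta n p q F : ℝ) ≤ C * (n : ℝ) ^ (k - 1 - p - q)) := by
  classical
  set e := k - 1 - p - q with he
  set M := p + 4*q + 3 with hM
  set G := gW k q with hG
  set Cnat := G.choose (q+1) with hCnat
  set K := 2^e * e.factorial with hK
  have hKpos : 0 < K := by positivity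
  refine ⟨(K : ℝ)⁻¹, (Cnat : ℝ) + 1, by positivity, by positivity,
    2*(M + k + e + G + p + q + 10), fun n hn => ?_⟩
  constructor
  · -- lower bound via the construction
    refine ⟨Fcon n q k, Fcon_subset n q k, Fcon_intersecting n q k, ?_⟩
    -- every element of the beta-set is large
    have hlow : ∀ m ∈ {m | ∃ A B : Finset ℕ, A ⊆ Finset.range n ∧ B ⊆ Finset.range n ∧
        Disjoint A B ∧ A.card = p ∧ B.card = q ∧ m = (famAB (Fcon n q k) A B).card},
        (n - M).choose e ≤ m := by
      rintro m ⟨A, B, hA, hB, hd, hcA, hcB, rfl⟩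
      exact Fcon_famAB_lower p q k n h (by omega) A B hA hB hd hcA hcB
    have hne : Set.Nonempty {m | ∃ A B : Finset ℕ, A ⊆ Finset.range n ∧
        B ⊆ Finset.range n ∧ Disjoint A B ∧ A.card = p ∧ B.card = q ∧
        m = (famAB (Fcon n q k) A B).card} := by
      refine ⟨(famAB (Fcon n q k) (Finset.range p)
        ((Finset.range (p+q)) \ (Finset.range p))).card,
        Finset.range p, (Finset.range (p+q)) \ (Finset.range p), ?_, ?_, ?_, ?_, ?_, rfl⟩
      · exact Finset.range_subset_range.mpr (by omega)
      · exact Finset.sdiff_subset.trans (Finset.range_subset_range.mpr (by omega))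
      · exact Finset.disjoint_left.mpr fun x hx hx2 => (Finset.mem_sdiff.mp hx2).2 hx
      · exact Finset.card_range p
      · rw [Finset.card_sdiff_of_subset (Finset.range_subset_range.mpr (by omega))]
        simp
    have hbeta : (n - M).choose e ≤ beta n p q (Fcon n q k) := by
      rw [beta]
      exact hlow _ (Nat.sInf_mem hne)
    -- analytic estimate : (K)⁻¹ * n ^ e ≤ (n - M).choose e
    have hnatineq : n ^ e ≤ K * ((n - M).choose e) := by
      have h1 : n ≤ 2 * ((n - M) + 1 - e) := by omega
      have h2 : n ^ e ≤ (2 * ((n - M) + 1 - e)) ^ e := Nat.pow_le_pow_left h1 e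
      have h3 : (2 * ((n - M) + 1 - e)) ^ e = 2^e * ((n - M) + 1 - e) ^ e :=
        Nat.mul_pow 2 _ e
      have h4 : ((n - M) + 1 - e) ^ e ≤ (n - M).descFactorial e :=
        Nat.pow_sub_le_descFactorial (n - M) e
      have h5 : (n - M).descFactorial e = e.factorial * (n - M).choose e :=
        Nat.descFactorial_eq_factorial_mul_choose _ _
      calc n ^ e ≤ 2^e * ((n - M) + 1 - e) ^ e := by rw [← h3]; exact h2
        _ ≤ 2^e * ((n - M).descFactorial e) := Nat.mul_le_mul_left _ h4
        _ = K * ((n - M).choose e) := by rw [h5, hK, mul_assoc]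
    have hreal : ((n : ℝ)) ^ e ≤ (K : ℝ) * (((n - M).choose e : ℕ) : ℝ) := by
      have := hnatineq
      exact_mod_cast this
    have hKR : (0:ℝ) < (K : ℝ) := by exact_mod_cast hKpos
    calc (K : ℝ)⁻¹ * (n : ℝ) ^ e = (n : ℝ) ^ e / (K : ℝ) := by
          rw [inv_mul_eq_div]
      _ ≤ (((n - M).choose e : ℕ) : ℝ) := by
          rw [div_le_iff₀ hKR]
          rw [mul_comm]
          exact hreal
      _ ≤ (beta n p q (Fcon n q k) : ℝ) := by exact_mod_cast hbeta
  · -- upper bound for every intersecting family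
    intro F hFsub hF
    have hub : beta n p q F ≤ Cnat * n ^ e :=
      upper_bound p q k n h (by omega) F hFsub hF
    calc (beta n p q F : ℝ) ≤ ((Cnat * n ^ e : ℕ) : ℝ) := by exact_mod_cast hub
      _ = (Cnat : ℝ) * (n : ℝ) ^ e := by push_cast; ring
      _ ≤ ((Cnat : ℝ) + 1) * (n : ℝ) ^ e := by
          have : (0:ℝ) ≤ (n : ℝ) ^ e := by positivity
          nlinarith
end

section
/- Let T be a (q+1)-uniform intersecting family with covering number τ(T) = q+1, and let k > p + q. Define F = {T ∪ G : T ∈ T, G ⊆ [n] \ T, |G| = k - q - 1}. Then for n ≥ k + q, F is intersecting and β_{p,q}(F) ≥ binomial(n - p - 2q - 1, k - p - q - 1). -/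
/-- Lower-bound construction: from a (q+1)-uniform intersecting family T with
τ(T) = q+1 one builds a k-uniform intersecting family F (the k-sets in [n]
containing some member of T) with β_{p,q}(F) ≥ binom(n-p-2q-1, k-p-q-1). -/
theorem beta_lower_construction (n k p q : ℕ) (T : Finset (Finset ℕ))
    (hground : ∀ A ∈ T, A ⊆ Finset.range n)
    (hunif : ∀ A ∈ T, A.card = q + 1)
    (hint : Intersecting T)
    (htau : coverNum T = q + 1)
    (hk : p + q < k) (hn : k + q ≤ n) :
    Intersecting (((Finset.range n).powersetCard k).filter fun S => ∃ A ∈ T, A ⊆ S) ∧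
    Nat.choose (n - p - 2 * q - 1) (k - p - q - 1) ≤
      beta n p q (((Finset.range n).powersetCard k).filter fun S => ∃ A ∈ T, A ⊆ S) := by
  set F := ((Finset.range n).powersetCard k).filter (fun S => ∃ A ∈ T, A ⊆ S) with hF
  have key : ∀ A B : Finset ℕ, A ⊆ Finset.range n → B ⊆ Finset.range n →
      Disjoint A B → A.card = p → B.card = q →
      Nat.choose (n - p - 2*q - 1) (k - p - q - 1) ≤ (famAB F A B).card := by
    intro A B hA hB hAB hAp hBq
    have hT0 : ∃ T₀ ∈ T, Disjoint B T₀ := by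
      by_contra h
      push_neg at h
      have hcov : IsCover T B := fun S hS =>
        Finset.not_disjoint_iff_nonempty_inter.mp (h S hS)
      have : coverNum T ≤ q := Nat.sInf_le ⟨B, hBq, hcov⟩
      omega
    obtain ⟨T₀, hT₀T, hBT₀⟩ := hT0
    set C := A ∪ T₀ with hC
    have hCn : C ⊆ Finset.range n := Finset.union_subset hA (hground T₀ hT₀T)
    have hcC : C.card ≤ p + q + 1 := by
      calc C.card ≤ A.card + T₀.card := Finset.card_union_le _ _
      _ = p + q + 1 := by rw [hAp, hunif T₀ hT₀T]; omega
    have hBC : Disjoint B C := by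
      rw [hC, Finset.disjoint_union_right]
      exact ⟨hAB.symm, hBT₀⟩
    have hCBn : C ∪ B ⊆ Finset.range n := Finset.union_subset hCn hB
    have hCB : (C ∪ B).card = C.card + q := by
      rw [Finset.card_union_of_disjoint hBC.symm, hBq]
    set s := Finset.range n \ (C ∪ B) with hs
    have hscard : s.card = n - (C.card + q) := by
      rw [hs, Finset.card_sdiff_of_subset hCBn, Finset.card_range, hCB]
    have hck : C.card ≤ k := by omega
    have hinj : (s.powersetCard (k - C.card)).card ≤ (famAB F A B).card := by
      apply Finset.card_le_card_of_injOn (fun G => C ∪ G)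
      · intro G hG
        rw [Finset.mem_coe, Finset.mem_powersetCard] at hG
        obtain ⟨hGs, hGc⟩ := hG
        rw [hs, Finset.subset_sdiff] at hGs
        obtain ⟨hGn, hGd⟩ := hGs
        rw [Finset.disjoint_union_right] at hGd
        have hcard : (C ∪ G).card = k := by
          rw [Finset.card_union_of_disjoint hGd.1.symm, hGc]
          omega
        rw [Finset.mem_coe, famAB, Finset.mem_filter]
        refine ⟨?_, Finset.Subset.trans Finset.subset_union_left Finset.subset_union_left, ?_⟩
        · rw [hF, Finset.mem_filter, Finset.mem_powersetCard]
          exact ⟨⟨Finset.union_subset hCn hGn, hcard⟩, T₀, hT₀T,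
            Finset.Subset.trans Finset.subset_union_right Finset.subset_union_left⟩
        · rw [Finset.disjoint_union_right]
          exact ⟨hBC, hGd.2.symm⟩
      · intro G₁ h₁ G₂ h₂ he
        rw [Finset.mem_coe, Finset.mem_powersetCard, hs, Finset.subset_sdiff] at h₁ h₂
        have d₁ : Disjoint C G₁ := by
          have := h₁.1.2; rw [Finset.disjoint_union_right] at this; exact this.1.symm
        have d₂ : Disjoint C G₂ := by
          have := h₂.1.2; rw [Finset.disjoint_union_right] at this; exact this.1.symm
        calc G₁ = (C ∪ G₁) \ C := (Finset.union_sdiff_cancel_left d₁).symm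
        _ = (C ∪ G₂) \ C := congrArg (· \ C) he
        _ = G₂ := Finset.union_sdiff_cancel_left d₂
    rw [Finset.card_powersetCard, hscard] at hinj
    refine le_trans ?_ hinj
    set a₁ := k - p - q - 1 with ha₁
    set a₂ := k - C.card with ha₂
    set d := n - q - k with hd
    have e₁ : n - p - 2*q - 1 = a₁ + d := by omega
    have e₂ : n - (C.card + q) = a₂ + d := by omega
    have e₃ : a₁ ≤ a₂ := by omega
    rw [e₁, e₂]
    have s₁ : (a₁ + d).choose a₁ = (a₁ + d).choose d := by
      have h := Nat.choose_symm (Nat.le_add_left d a₁)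
      rwa [Nat.add_sub_cancel] at h
    have s₂ : (a₂ + d).choose d = (a₂ + d).choose a₂ := by
      have h := Nat.choose_symm (Nat.le_add_left d a₂)
      rw [Nat.add_sub_cancel] at h
      exact h.symm
    calc (a₁ + d).choose a₁ = (a₁ + d).choose d := s₁
    _ ≤ (a₂ + d).choose d := Nat.choose_le_choose d (by omega)
    _ = (a₂ + d).choose a₂ := s₂
  constructor
  · intro S₁ hS₁ S₂ hS₂
    rw [hF, Finset.mem_filter] at hS₁ hS₂
    obtain ⟨-, A₁, hA₁, hA₁S⟩ := hS₁
    obtain ⟨-, A₂, hA₂, hA₂S⟩ := hS₂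
    obtain ⟨x, hx⟩ := hint A₁ hA₁ A₂ hA₂
    rw [Finset.mem_inter] at hx
    exact ⟨x, Finset.mem_inter.mpr ⟨hA₁S hx.1, hA₂S hx.2⟩⟩
  · rw [beta]
    apply le_csInf
    · refine ⟨(famAB F (Finset.range p) (Finset.Ico p (p+q))).card,
        Finset.range p, Finset.Ico p (p+q), ?_, ?_, ?_, ?_, ?_, rfl⟩
      · exact Finset.range_subset_range.mpr (by omega)
      · intro x hx
        rw [Finset.mem_Ico] at hx
        rw [Finset.mem_range]
        omega
      · rw [Finset.range_eq_Ico]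
        exact Finset.Ico_disjoint_Ico_consecutive 0 p (p+q)
      · exact Finset.card_range p
      · rw [Nat.card_Ico]; omega
    · rintro m ⟨A, B, h1, h2, h3, h4, h5, rfl⟩
      exact key A B h1 h2 h3 h4 h5
end

section
/- β_{0,2}(n, 3) = 2 for all sufficiently large n; that is, the maximum over 3-uniform intersecting families F ⊆ binomial([n],3) of min over pairs {x,y} ⊆ [n] of the number of members of F disjoint from {x,y}, equals 2. -/
lemma three_mem {s : Finset (Finset ℕ)} (h : 3 ≤ s.card) :
    ∃ S1 ∈ s, ∃ S2 ∈ s, ∃ S3 ∈ s, S1 ≠ S2 ∧ S1 ≠ S3 ∧ S2 ≠ S3 := by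
  obtain ⟨t, hts, ht⟩ := Finset.exists_subset_card_eq h
  rw [Finset.card_eq_three] at ht
  obtain ⟨x, y, z, hxy, hxz, hyz, rfl⟩ := ht
  exact ⟨x, hts (by simp), y, hts (by simp), z, hts (by simp), hxy, hxz, hyz⟩

lemma pair_disj {x y : ℕ} {S : Finset ℕ} :
    Disjoint ({x, y} : Finset ℕ) S ↔ x ∉ S ∧ y ∉ S := by
  simp [Finset.disjoint_insert_left]

lemma pair_other {P : Finset ℕ} {x : ℕ} (hP : P.card = 2) (hx : x ∈ P) :
    ∃ t, t ≠ x ∧ P = {x, t} := by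
  obtain ⟨u, v, huv, rfl⟩ := Finset.card_eq_two.mp hP
  simp at hx
  rcases hx with rfl | rfl
  · exact ⟨v, huv.symm, rfl⟩
  · exact ⟨u, huv, by rw [Finset.pair_comm]⟩

lemma pick_antipodal {α : Type*} {e1 e2 e3 e4 x1 x2 x3 : α}
    (h1 : x1 = e1 ∨ x1 = e2 ∨ x1 = e3 ∨ x1 = e4)
    (h2 : x2 = e1 ∨ x2 = e2 ∨ x2 = e3 ∨ x2 = e4)
    (h3 : x3 = e1 ∨ x3 = e2 ∨ x3 = e3 ∨ x3 = e4)
    (n12 : x1 ≠ x2) (n13 : x1 ≠ x3) (n23 : x2 ≠ x3) :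
    ((e1 = x1 ∨ e1 = x2 ∨ e1 = x3) ∧ (e4 = x1 ∨ e4 = x2 ∨ e4 = x3)) ∨
    ((e2 = x1 ∨ e2 = x2 ∨ e2 = x3) ∧ (e3 = x1 ∨ e3 = x2 ∨ e3 = x3)) := by
  rcases h1 with rfl | rfl | rfl | rfl <;> rcases h2 with rfl | rfl | rfl | rfl <;>
    rcases h3 with rfl | rfl | rfl | rfl <;> tauto

lemma edge_cases {p1 p2 p3 p4 : ℕ} {R : Finset ℕ}
    (h13 : p1 ≠ p3) (h14 : p1 ≠ p4) (h23 : p2 ≠ p3) (h24 : p2 ≠ p4)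
    (hR : R.card = 2)
    (h1 : p1 ∈ R ∨ p2 ∈ R) (h2 : p3 ∈ R ∨ p4 ∈ R) :
    R = {p1, p3} ∨ R = {p1, p4} ∨ R = {p2, p3} ∨ R = {p2, p4} := by
  have key : ∀ x y : ℕ, x ≠ y → x ∈ R → y ∈ R → R = {x, y} := by
    intro x y hxy hx hy
    refine (Finset.eq_of_subset_of_card_le ?_ ?_).symm
    · intro z hz
      simp at hz
      rcases hz with rfl | rfl
      exacts [hx, hy]
    · rw [hR, Finset.card_pair hxy]
  rcases h1 with h | h <;> rcases h2 with h' | h'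
  · exact Or.inl (key _ _ h13 h h')
  · exact Or.inr (Or.inl (key _ _ h14 h h'))
  · exact Or.inr (Or.inr (Or.inl (key _ _ h23 h h')))
  · exact Or.inr (Or.inr (Or.inr (key _ _ h24 h h')))

lemma elim_edge {A B C D y : Finset ℕ} (hy : y = A ∨ y = B ∨ y = C ∨ y = D)
    (hAD : Disjoint A D) (hA : (A ∩ y).Nonempty) (hD : (D ∩ y).Nonempty) :
    y = B ∨ y = C := by
  rcases hy with rfl | rfl | rfl | rfl
  · exact absurd hD (by simp [Finset.disjoint_iff_inter_eq_empty.mp hAD.symm])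
  · exact Or.inl rfl
  · exact Or.inr rfl
  · exact absurd hA (by simp [Finset.disjoint_iff_inter_eq_empty.mp hAD])

lemma no_three {q r : Finset ℕ} {y1 y2 y3 : Finset ℕ}
    (h1 : y1 = q ∨ y1 = r) (h2 : y2 = q ∨ y2 = r) (h3 : y3 = q ∨ y3 = r)
    (d12 : y1 ≠ y2) (d13 : y1 ≠ y3) (d23 : y2 ≠ y3) : False := by
  rcases h1 with rfl | rfl <;> rcases h2 with rfl | rfl <;> rcases h3 with rfl | rfl <;> tauto

lemma char_mem {F : Finset (Finset ℕ)} (hI : Intersecting F) {A : Finset ℕ} (hA : A ∈ F)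
    {x y z : ℕ} (hxyz : A = {x, y, z}) {S : Finset ℕ} (hS : S ∈ F)
    (hy : y ∉ S) (hz : z ∉ S) : x ∈ S := by
  obtain ⟨w, hw⟩ := hI S hS A hA
  rw [Finset.mem_inter, hxyz] at hw
  obtain ⟨hwS, hwA⟩ := hw
  simp at hwA
  rcases hwA with rfl | rfl | rfl
  · exact hwS
  · exact absurd hwS hy
  · exact absurd hwS hz
lemma main_lemma (n : ℕ) (hn : 2 ≤ n) (F : Finset (Finset ℕ))
    (hF : F ⊆ (Finset.range n).powersetCard 3) (hI : Intersecting F) :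
    ∃ Q : Finset ℕ, Q ⊆ Finset.range n ∧ Q.card = 2 ∧
      (F.filter (fun S => Disjoint Q S)).card ≤ 2 := by
  by_contra hcon
  push_neg at hcon
  have H : ∀ x y : ℕ, x ∈ Finset.range n → y ∈ Finset.range n → x ≠ y →
      3 ≤ (F.filter (fun S => Disjoint ({x, y} : Finset ℕ) S)).card := by
    intro x y hx hy hxy
    have h := hcon {x, y} (by
      intro z hz
      simp at hz
      rcases hz with rfl | rfl <;> assumption) (Finset.card_pair hxy)
    omega
  have hmem : ∀ S ∈ F, S.card = 3 ∧ S ⊆ Finset.range n := by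
    intro S hS
    have h := hF hS
    rw [Finset.mem_powersetCard] at h
    exact ⟨h.2, h.1⟩
  have h0n : (0 : ℕ) ∈ Finset.range n := by simp; omega
  have h1n : (1 : ℕ) ∈ Finset.range n := by simp; omega
  have hFne : F.Nonempty := by
    have h3 := H 0 1 h0n h1n (by norm_num)
    have hle := Finset.card_le_card
      (Finset.filter_subset (fun S => Disjoint ({0, 1} : Finset ℕ) S) F)
    rw [← Finset.card_pos]; omega
  obtain ⟨A, hA⟩ := hFne
  obtain ⟨hA3, hAsub⟩ := hmem A hA
  rw [Finset.card_eq_three] at hA3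
  obtain ⟨a, b, c, hab, hac, hbc, rfl⟩ := hA3
  have han : a ∈ Finset.range n := hAsub (by simp)
  have hbn : b ∈ Finset.range n := hAsub (by simp)
  have hcn : c ∈ Finset.range n := hAsub (by simp)
  -- the three "link" families
  have hFa3 := H b c hbn hcn hbc
  have hFb3 := H a c han hcn hac
  have hFc3 := H a b han hbn hab
  -- characterization of members of each family
  have charA : ∀ S ∈ F, Disjoint ({b, c} : Finset ℕ) S →
      a ∈ S ∧ b ∉ S ∧ c ∉ S ∧ S.card = 3 ∧ S ⊆ Finset.range n := by
    intro S hS hd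
    rw [pair_disj] at hd
    exact ⟨char_mem hI hA rfl hS hd.1 hd.2, hd.1, hd.2, (hmem S hS).1, (hmem S hS).2⟩
  have charB : ∀ S ∈ F, Disjoint ({a, c} : Finset ℕ) S →
      b ∈ S ∧ a ∉ S ∧ c ∉ S ∧ S.card = 3 := by
    intro S hS hd
    rw [pair_disj] at hd
    exact ⟨char_mem hI hA (by ext w; simp; tauto) hS hd.1 hd.2, hd.1, hd.2, (hmem S hS).1⟩
  have charC : ∀ S ∈ F, Disjoint ({a, b} : Finset ℕ) S →
      c ∈ S ∧ a ∉ S ∧ b ∉ S ∧ S.card = 3 := by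
    intro S hS hd
    rw [pair_disj] at hd
    exact ⟨char_mem hI hA (by ext w; simp; tauto) hS hd.1 hd.2, hd.1, hd.2, (hmem S hS).1⟩
  by_cases hcase : ∀ S ∈ F, Disjoint ({b, c} : Finset ℕ) S →
      ∀ T ∈ F, Disjoint ({b, c} : Finset ℕ) T → S ≠ T → (S.erase a) ∩ (T.erase a) = ∅
  ·
    obtain ⟨S, hS', T, hT', W, hW', nST, _, _⟩ := three_mem hFa3
    rw [Finset.mem_filter] at hS' hT'
    have hSF := hS'.1; have hSd := hS'.2
    have hTF := hT'.1; have hTd := hT'.2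
    have hST : (S.erase a) ∩ (T.erase a) = ∅ := hcase S hSF hSd T hTF hTd nST
    clear hW'
    obtain ⟨haS, hbS, hcS, hcardS, _⟩ := charA S hSF hSd
    obtain ⟨haT, hbT, hcT, hcardT, _⟩ := charA T hTF hTd
    have hPc : (S.erase a).card = 2 := by rw [Finset.card_erase_of_mem haS, hcardS]
    have hP'c : (T.erase a).card = 2 := by rw [Finset.card_erase_of_mem haT, hcardT]
    obtain ⟨p1, p2, hp12, hP⟩ := Finset.card_eq_two.mp hPc
    obtain ⟨p3, p4, hp34, hP'⟩ := Finset.card_eq_two.mp hP'c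
    have hdisjPP : ∀ w : ℕ, w ∈ S.erase a → w ∈ T.erase a → False := by
      intro w h1 h2
      have : w ∈ S.erase a ∩ T.erase a := Finset.mem_inter.mpr ⟨h1, h2⟩
      rw [hST] at this; simp at this
    have hp13 : p1 ≠ p3 := by
      intro h; exact hdisjPP p1 (by rw [hP]; simp) (by rw [hP']; simp [h])
    have hp14 : p1 ≠ p4 := by
      intro h; exact hdisjPP p1 (by rw [hP]; simp) (by rw [hP']; simp [h])
    have hp23 : p2 ≠ p3 := by
      intro h; exact hdisjPP p2 (by rw [hP]; simp) (by rw [hP']; simp [h])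
    have hp24 : p2 ≠ p4 := by
      intro h; exact hdisjPP p2 (by rw [hP]; simp) (by rw [hP']; simp [h])
    -- every member of F_b or F_c gives an edge of the K22 on {p1,p2} × {p3,p4}
    have edge_of : ∀ z : ℕ, z ∈ ({b, c} : Finset ℕ) → ∀ U ∈ F, z ∈ U → a ∉ U →
        U.erase z = {p1, p3} ∨ U.erase z = {p1, p4} ∨
        U.erase z = {p2, p3} ∨ U.erase z = {p2, p4} := by
      intro z hz U hUF hzU haU
      have hUcard : U.card = 3 := (hmem U hUF).1
      have hRcard : (U.erase z).card = 2 := by rw [Finset.card_erase_of_mem hzU, hUcard]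
      have hzbc : z ∉ S ∧ z ∉ T := by
        simp at hz; rcases hz with rfl | rfl <;> exact ⟨by assumption, by assumption⟩
      have hmeetS : p1 ∈ U.erase z ∨ p2 ∈ U.erase z := by
        obtain ⟨w, hw⟩ := hI U hUF S hSF
        rw [Finset.mem_inter] at hw
        have hwz : w ≠ z := fun h => hzbc.1 (h ▸ hw.2)
        have hwa : w ≠ a := fun h => haU (h ▸ hw.1)
        have hwP : w ∈ S.erase a := Finset.mem_erase.mpr ⟨hwa, hw.2⟩
        rw [hP] at hwP; simp at hwP
        rcases hwP with rfl | rfl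
        · exact Or.inl (Finset.mem_erase.mpr ⟨hwz, hw.1⟩)
        · exact Or.inr (Finset.mem_erase.mpr ⟨hwz, hw.1⟩)
      have hmeetT : p3 ∈ U.erase z ∨ p4 ∈ U.erase z := by
        obtain ⟨w, hw⟩ := hI U hUF T hTF
        rw [Finset.mem_inter] at hw
        have hwz : w ≠ z := fun h => hzbc.2 (h ▸ hw.2)
        have hwa : w ≠ a := fun h => haU (h ▸ hw.1)
        have hwP : w ∈ T.erase a := Finset.mem_erase.mpr ⟨hwa, hw.2⟩
        rw [hP'] at hwP; simp at hwP
        rcases hwP with rfl | rfl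
        · exact Or.inl (Finset.mem_erase.mpr ⟨hwz, hw.1⟩)
        · exact Or.inr (Finset.mem_erase.mpr ⟨hwz, hw.1⟩)
      exact edge_cases hp13 hp14 hp23 hp24 hRcard hmeetS hmeetT
    -- extract three distinct members from F_b and F_c
    obtain ⟨U1, hU1, U2, hU2, U3, hU3, m12, m13, m23⟩ := three_mem hFb3
    obtain ⟨V1, hV1, V2, hV2, V3, hV3, k12, k13, k23⟩ := three_mem hFc3
    rw [Finset.mem_filter] at hU1 hU2 hU3 hV1 hV2 hV3
    obtain ⟨hbU1, haU1, hcU1, _⟩ := charB U1 hU1.1 hU1.2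
    obtain ⟨hbU2, haU2, hcU2, _⟩ := charB U2 hU2.1 hU2.2
    obtain ⟨hbU3, haU3, hcU3, _⟩ := charB U3 hU3.1 hU3.2
    obtain ⟨hcV1, haV1, hbV1, _⟩ := charC V1 hV1.1 hV1.2
    obtain ⟨hcV2, haV2, hbV2, _⟩ := charC V2 hV2.1 hV2.2
    obtain ⟨hcV3, haV3, hbV3, _⟩ := charC V3 hV3.1 hV3.2
    have hx1 := edge_of b (by simp) U1 hU1.1 hbU1 haU1
    have hx2 := edge_of b (by simp) U2 hU2.1 hbU2 haU2
    have hx3 := edge_of b (by simp) U3 hU3.1 hbU3 haU3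
    have hy1 := edge_of c (by simp) V1 hV1.1 hcV1 haV1
    have hy2 := edge_of c (by simp) V2 hV2.1 hcV2 haV2
    have hy3 := edge_of c (by simp) V3 hV3.1 hcV3 haV3
    have ed12 : U1.erase b ≠ U2.erase b := by
      intro h; apply m12
      rw [← Finset.insert_erase hbU1, ← Finset.insert_erase hbU2, h]
    have ed13 : U1.erase b ≠ U3.erase b := by
      intro h; apply m13
      rw [← Finset.insert_erase hbU1, ← Finset.insert_erase hbU3, h]
    have ed23 : U2.erase b ≠ U3.erase b := by
      intro h; apply m23
      rw [← Finset.insert_erase hbU2, ← Finset.insert_erase hbU3, h]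
    have fd12 : V1.erase c ≠ V2.erase c := by
      intro h; apply k12
      rw [← Finset.insert_erase hcV1, ← Finset.insert_erase hcV2, h]
    have fd13 : V1.erase c ≠ V3.erase c := by
      intro h; apply k13
      rw [← Finset.insert_erase hcV1, ← Finset.insert_erase hcV3, h]
    have fd23 : V2.erase c ≠ V3.erase c := by
      intro h; apply k23
      rw [← Finset.insert_erase hcV2, ← Finset.insert_erase hcV3, h]
    -- cross-intersection between b-edges and c-edges
    have cross : ∀ U ∈ F, b ∈ U → c ∉ U → ∀ V ∈ F, c ∈ V → b ∉ V →
        ((U.erase b) ∩ (V.erase c)).Nonempty := by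
      intro U hU hbU hcU V hV hcV hbV
      obtain ⟨w, hw⟩ := hI U hU V hV
      rw [Finset.mem_inter] at hw
      have hwb : w ≠ b := fun h => hbV (h ▸ hw.2)
      have hwc : w ≠ c := fun h => hcU (h ▸ hw.1)
      exact ⟨w, Finset.mem_inter.mpr ⟨Finset.mem_erase.mpr ⟨hwb, hw.1⟩,
        Finset.mem_erase.mpr ⟨hwc, hw.2⟩⟩⟩
    have c1 := cross U1 hU1.1 hbU1 hcU1
    have c2 := cross U2 hU2.1 hbU2 hcU2
    have c3 := cross U3 hU3.1 hbU3 hcU3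
    -- disjointness of the two antipodal classes
    have hd14 : Disjoint ({p1, p3} : Finset ℕ) ({p2, p4} : Finset ℕ) := by
      rw [Finset.disjoint_left]
      intro w hw hw'; simp at hw hw'; omega
    have hd23 : Disjoint ({p1, p4} : Finset ℕ) ({p2, p3} : Finset ℕ) := by
      rw [Finset.disjoint_left]
      intro w hw hw'; simp at hw hw'; omega
    -- apply pigeonhole to the b-edges
    rcases pick_antipodal hx1 hx2 hx3 ed12 ed13 ed23 with ⟨he1, he4⟩ | ⟨he2, he3⟩
    · -- {p1,p3} and {p2,p4} are both b-edges
      have hA' : ∀ V ∈ F, c ∈ V → b ∉ V → (({p1, p3} : Finset ℕ) ∩ V.erase c).Nonempty := by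
        intro V hV hcV hbV
        rcases he1 with h | h | h <;> rw [h]
        · exact c1 V hV hcV hbV
        · exact c2 V hV hcV hbV
        · exact c3 V hV hcV hbV
      have hD' : ∀ V ∈ F, c ∈ V → b ∉ V → (({p2, p4} : Finset ℕ) ∩ V.erase c).Nonempty := by
        intro V hV hcV hbV
        rcases he4 with h | h | h <;> rw [h]
        · exact c1 V hV hcV hbV
        · exact c2 V hV hcV hbV
        · exact c3 V hV hcV hbV
      have g1 := elim_edge hy1 hd14 (hA' V1 hV1.1 hcV1 hbV1) (hD' V1 hV1.1 hcV1 hbV1)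
      have g2 := elim_edge hy2 hd14 (hA' V2 hV2.1 hcV2 hbV2) (hD' V2 hV2.1 hcV2 hbV2)
      have g3 := elim_edge hy3 hd14 (hA' V3 hV3.1 hcV3 hbV3) (hD' V3 hV3.1 hcV3 hbV3)
      exact no_three g1 g2 g3 fd12 fd13 fd23
    · -- {p1,p4} and {p2,p3} are both b-edges
      have hA' : ∀ V ∈ F, c ∈ V → b ∉ V → (({p1, p4} : Finset ℕ) ∩ V.erase c).Nonempty := by
        intro V hV hcV hbV
        rcases he2 with h | h | h <;> rw [h]
        · exact c1 V hV hcV hbV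
        · exact c2 V hV hcV hbV
        · exact c3 V hV hcV hbV
      have hD' : ∀ V ∈ F, c ∈ V → b ∉ V → (({p2, p3} : Finset ℕ) ∩ V.erase c).Nonempty := by
        intro V hV hcV hbV
        rcases he3 with h | h | h <;> rw [h]
        · exact c1 V hV hcV hbV
        · exact c2 V hV hcV hbV
        · exact c3 V hV hcV hbV
      have hy1' : V1.erase c = {p1, p4} ∨ V1.erase c = {p1, p3} ∨
          V1.erase c = {p2, p4} ∨ V1.erase c = {p2, p3} := by
        rcases hy1 with h | h | h | h
        exacts [Or.inr (Or.inl h), Or.inl h, Or.inr (Or.inr (Or.inr h)), Or.inr (Or.inr (Or.inl h))]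
      have g1 := elim_edge hy1' hd23
        (hA' V1 hV1.1 hcV1 hbV1) (hD' V1 hV1.1 hcV1 hbV1)
      have hy2' : V2.erase c = {p1, p4} ∨ V2.erase c = {p1, p3} ∨
          V2.erase c = {p2, p4} ∨ V2.erase c = {p2, p3} := by
        rcases hy2 with h | h | h | h
        exacts [Or.inr (Or.inl h), Or.inl h, Or.inr (Or.inr (Or.inr h)), Or.inr (Or.inr (Or.inl h))]
      have g2 := elim_edge hy2' hd23
        (hA' V2 hV2.1 hcV2 hbV2) (hD' V2 hV2.1 hcV2 hbV2)
      have hy3' : V3.erase c = {p1, p4} ∨ V3.erase c = {p1, p3} ∨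
          V3.erase c = {p2, p4} ∨ V3.erase c = {p2, p3} := by
        rcases hy3 with h | h | h | h
        exacts [Or.inr (Or.inl h), Or.inl h, Or.inr (Or.inr (Or.inr h)), Or.inr (Or.inr (Or.inl h))]
      have g3 := elim_edge hy3' hd23
        (hA' V3 hV3.1 hcV3 hbV3) (hD' V3 hV3.1 hcV3 hbV3)
      exact no_three g1 g2 g3 fd12 fd13 fd23
  · -- Case A : two distinct members of the link of a sharing a point
    push_neg at hcase
    obtain ⟨S1, hS1F, hS1d, S2, hS2F, hS2d, n12, hne⟩ := hcase
    obtain ⟨x, hx12⟩ := hne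
    rw [Finset.mem_inter, Finset.mem_erase, Finset.mem_erase] at hx12
    obtain ⟨⟨hxa, hxS1⟩, _, hxS2⟩ := hx12
    obtain ⟨haS1, hbS1, hcS1, hcard1, hsub1⟩ := charA S1 hS1F hS1d
    obtain ⟨haS2, hbS2, hcS2, hcard2, hsub2⟩ := charA S2 hS2F hS2d
    have hP1c : (S1.erase a).card = 2 := by rw [Finset.card_erase_of_mem haS1, hcard1]
    have hP2c : (S2.erase a).card = 2 := by rw [Finset.card_erase_of_mem haS2, hcard2]
    have hxn : x ∈ Finset.range n := hsub1 hxS1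
    obtain ⟨t1, ht1x, hP1⟩ := pair_other hP1c (Finset.mem_erase.mpr ⟨hxa, hxS1⟩)
    obtain ⟨t2, ht2x, hP2⟩ := pair_other hP2c (Finset.mem_erase.mpr ⟨hxa, hxS2⟩)
    have hS1eq : S1 = insert a {x, t1} := by rw [← hP1, Finset.insert_erase haS1]
    have hS2eq : S2 = insert a {x, t2} := by rw [← hP2, Finset.insert_erase haS2]
    have ht1mem : t1 ∈ S1 := by rw [hS1eq]; simp
    have ht2mem : t2 ∈ S2 := by rw [hS2eq]; simp
    have ht1b : t1 ≠ b := fun h => hbS1 (h ▸ ht1mem)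
    have ht1c : t1 ≠ c := fun h => hcS1 (h ▸ ht1mem)
    have ht2b : t2 ≠ b := fun h => hbS2 (h ▸ ht2mem)
    have ht2c : t2 ≠ c := fun h => hcS2 (h ▸ ht2mem)
    have ht12 : t1 ≠ t2 := by
      intro h
      exact n12 (by rw [hS1eq, hS2eq, h])
    -- members avoiding {a, x} must contain t1 and t2 and b or c : at most 2 of them
    have h3 := H a x han hxn (Ne.symm hxa)
    have hsub2' : F.filter (fun S => Disjoint ({a, x} : Finset ℕ) S) ⊆
        {({t1, t2, b} : Finset ℕ), ({t1, t2, c} : Finset ℕ)} := by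
      intro M hM
      rw [Finset.mem_filter, pair_disj] at hM
      obtain ⟨hMF, haM, hxM⟩ := hM
      have hMcard : M.card = 3 := (hmem M hMF).1
      have ht1M : t1 ∈ M := by
        obtain ⟨w, hw⟩ := hI M hMF S1 hS1F
        rw [Finset.mem_inter, hS1eq] at hw
        have hw2 := hw.2
        simp at hw2
        rcases hw2 with rfl | rfl | rfl
        · exact absurd hw.1 haM
        · exact absurd hw.1 hxM
        · exact hw.1
      have ht2M : t2 ∈ M := by
        obtain ⟨w, hw⟩ := hI M hMF S2 hS2F
        rw [Finset.mem_inter, hS2eq] at hw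
        have hw2 := hw.2
        simp at hw2
        rcases hw2 with rfl | rfl | rfl
        · exact absurd hw.1 haM
        · exact absurd hw.1 hxM
        · exact hw.1
      have hbc' : b ∈ M ∨ c ∈ M := by
        obtain ⟨w, hw⟩ := hI M hMF {a, b, c} hA
        rw [Finset.mem_inter] at hw
        have hw2 := hw.2
        simp at hw2
        rcases hw2 with rfl | rfl | rfl
        · exact absurd hw.1 haM
        · exact Or.inl hw.1
        · exact Or.inr hw.1
      simp only [Finset.mem_insert, Finset.mem_singleton]
      rcases hbc' with hb' | hc'
      · left
        refine (Finset.eq_of_subset_of_card_le ?_ ?_).symm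
        · intro z hz; simp at hz; rcases hz with rfl | rfl | rfl <;> assumption
        · rw [hMcard, Finset.card_insert_of_notMem (by simp [ht12, ht1b]),
            Finset.card_insert_of_notMem (by simp [ht2b]), Finset.card_singleton]
      · right
        refine (Finset.eq_of_subset_of_card_le ?_ ?_).symm
        · intro z hz; simp at hz; rcases hz with rfl | rfl | rfl <;> assumption
        · rw [hMcard, Finset.card_insert_of_notMem (by simp [ht12, ht1c]),
            Finset.card_insert_of_notMem (by simp [ht2c]), Finset.card_singleton]
    have hle := Finset.card_le_card hsub2'
    have hcard2' : ({({t1, t2, b} : Finset ℕ), ({t1, t2, c} : Finset ℕ)} :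
        Finset (Finset ℕ)).card ≤ 2 := (Finset.card_insert_le _ _).trans (by simp)
    omega
lemma famAB_empty (F : Finset (Finset ℕ)) (Q : Finset ℕ) :
    famAB F ∅ Q = F.filter (fun S => Disjoint Q S) := by
  unfold famAB
  apply Finset.filter_congr
  intro S _
  simp

def fano : Finset (Finset ℕ) :=
  {{0,1,2},{0,3,4},{0,5,6},{1,3,5},{1,4,6},{2,3,6},{2,4,5}}

lemma fano_props : ∀ S ∈ fano, S ⊆ Finset.range 7 ∧ S.card = 3 := by decide

lemma fano_int : Intersecting fano := by
  show ∀ A ∈ fano, ∀ B ∈ fano, (A ∩ B).Nonempty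
  decide

lemma fano_key : ∀ Q' ∈ (Finset.range 7).powerset, Q'.card ≤ 2 →
    2 ≤ (fano.filter (fun S => Disjoint Q' S)).card := by
  set_option maxRecDepth 10000 in decide

lemma fano_exact : (fano.filter (fun S => Disjoint ({0, 1} : Finset ℕ) S)).card = 2 := by
  decide

lemma fano_count (Q : Finset ℕ) (hQ : Q.card = 2) :
    2 ≤ (fano.filter (fun S => Disjoint Q S)).card := by
  have hred : fano.filter (fun S => Disjoint Q S) =
      fano.filter (fun S => Disjoint (Q ∩ Finset.range 7) S) := by
    apply Finset.filter_congr
    intro S hS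
    have hsub : S ⊆ Finset.range 7 := (fano_props S hS).1
    constructor
    · intro h
      exact Finset.disjoint_of_subset_left Finset.inter_subset_left h
    · intro h
      rw [Finset.disjoint_left] at h ⊢
      intro w hwQ hwS
      exact h (Finset.mem_inter.mpr ⟨hwQ, hsub hwS⟩) hwS
  rw [hred]
  exact fano_key (Q ∩ Finset.range 7) (Finset.mem_powerset.mpr Finset.inter_subset_right)
    ((Finset.card_le_card Finset.inter_subset_left).trans_eq hQ)

lemma beta_fano (n : ℕ) (hn : 7 ≤ n) : beta n 0 2 fano = 2 := by
  have h2mem : 2 ∈ {m | ∃ A B : Finset ℕ, A ⊆ Finset.range n ∧ B ⊆ Finset.range n ∧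
      Disjoint A B ∧ A.card = 0 ∧ B.card = 2 ∧ m = (famAB fano A B).card} := by
    refine ⟨∅, {0, 1}, Finset.empty_subset _, ?_, Finset.disjoint_empty_left _,
      Finset.card_empty, Finset.card_pair (by norm_num), ?_⟩
    · intro z hz; simp at hz; rcases hz with rfl | rfl <;> simp <;> omega
    · rw [famAB_empty, fano_exact]
  have hlb : ∀ m ∈ {m | ∃ A B : Finset ℕ, A ⊆ Finset.range n ∧ B ⊆ Finset.range n ∧
      Disjoint A B ∧ A.card = 0 ∧ B.card = 2 ∧ m = (famAB fano A B).card}, 2 ≤ m := by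
    rintro m ⟨A, B, hAn, hBn, hd, hA0, hB2, rfl⟩
    rw [Finset.card_eq_zero] at hA0
    subst hA0
    rw [famAB_empty]
    exact fano_count B hB2
  unfold beta
  exact le_antisymm (Nat.sInf_le h2mem) (hlb _ (Nat.sInf_mem ⟨2, h2mem⟩))

/-- β_{0,2}(n,3) = 2 for all large n. -/
theorem beta_zero_two_three : ∃ n₀ : ℕ, ∀ n ≥ n₀,
    (∃ F : Finset (Finset ℕ), F ⊆ (Finset.range n).powersetCard 3 ∧ Intersecting F ∧
      beta n 0 2 F = 2) ∧
    (∀ F : Finset (Finset ℕ), F ⊆ (Finset.range n).powersetCard 3 → Intersecting F →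
      beta n 0 2 F ≤ 2) := by
  refine ⟨9, fun n hn => ⟨⟨fano, ?_, fano_int, beta_fano n (by omega)⟩, ?_⟩⟩
  · intro S hS
    rw [Finset.mem_powersetCard]
    exact ⟨(fano_props S hS).1.trans (Finset.range_subset_range.mpr (by omega)), (fano_props S hS).2⟩
  · intro F hF hI
    obtain ⟨Q, hQn, hQ2, hle⟩ := main_lemma n (by omega) F hF hI
    unfold beta
    have hmem : (famAB F ∅ Q).card ∈ {m | ∃ A B : Finset ℕ, A ⊆ Finset.range n ∧
        B ⊆ Finset.range n ∧ Disjoint A B ∧ A.card = 0 ∧ B.card = 2 ∧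
        m = (famAB F A B).card} :=
      ⟨∅, Q, Finset.empty_subset _, hQn, Finset.disjoint_empty_left _,
        Finset.card_empty, hQ2, rfl⟩
    refine (Nat.sInf_le hmem).trans ?_
    rw [famAB_empty]
    exact hle
end

section
/- Let F be a 3-uniform intersecting family on ground set exactly [6] (every vertex is used) with β_{0,2}(F) ≥ 2. Then |F| = 10 and F contains exactly one triple from each complementary pair {T, [6]\T} of 3-subsets of [6]. -/
/-- A 3-uniform intersecting family with ground set exactly [6] and β_{0,2} ≥ 2
has 10 members, one from each complementary pair of triples of [6]. -/
theorem six_vertex_characterization (F : Finset (Finset ℕ))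
    (hF : F ⊆ (Finset.range 6).powersetCard 3)
    (hground : ∀ x ∈ Finset.range 6, ∃ A ∈ F, x ∈ A)
    (hint : Intersecting F)
    (hbeta : 2 ≤ beta 6 0 2 F) :
    F.card = 10 ∧
    ∀ T ⊆ Finset.range 6, T.card = 3 → (T ∈ F ↔ (Finset.range 6) \ T ∉ F) := by
  have hmem : ∀ S ∈ F, S ⊆ Finset.range 6 ∧ S.card = 3 := by
    intro S hS
    have := hF hS
    simpa [Finset.mem_powersetCard] using this
  -- β condition instantiated
  have h2 : ∀ B : Finset ℕ, B ⊆ Finset.range 6 → B.card = 2 →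
      2 ≤ (F.filter fun S => Disjoint B S).card := by
    intro B hB hBc
    have hmem2 : (F.filter fun S => Disjoint B S).card ∈
        {m | ∃ A B' : Finset ℕ, A ⊆ Finset.range 6 ∧ B' ⊆ Finset.range 6 ∧
          Disjoint A B' ∧ A.card = 0 ∧ B'.card = 2 ∧ m = (famAB F A B').card} := by
      refine ⟨∅, B, by simp, hB, by simp, by simp, hBc, ?_⟩
      simp [famAB]
    exact le_trans hbeta (Nat.sInf_le hmem2)
  -- complement map
  set c : Finset ℕ → Finset ℕ := fun S => Finset.range 6 \ S with hc
  have hcc : ∀ S : Finset ℕ, S ⊆ Finset.range 6 → c (c S) = S := by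
    intro S hS; exact Finset.sdiff_sdiff_eq_self hS
  have hInjOn : Set.InjOn c F := by
    intro S hS S' hS' h
    have h1 := hcc S (hmem S hS).1
    have h2 := hcc S' (hmem S' hS').1
    rw [← h1, ← h2, h]
  have himage : F.image c ⊆ (Finset.range 6).powersetCard 3 := by
    intro S hS
    simp only [Finset.mem_image] at hS
    obtain ⟨S', hS', rfl⟩ := hS
    obtain ⟨hsub, hcard⟩ := hmem S' hS'
    rw [Finset.mem_powersetCard]
    constructor
    · exact Finset.sdiff_subset
    · rw [Finset.card_sdiff_of_subset hsub, Finset.card_range, hcard]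
  have hdisj : Disjoint F (F.image c) := by
    rw [Finset.disjoint_left]
    intro S hS hS'
    simp only [Finset.mem_image] at hS'
    obtain ⟨S', hS', hEq⟩ := hS'
    have := hint S hS S' hS'
    obtain ⟨x, hx⟩ := this
    rw [Finset.mem_inter] at hx
    have : x ∈ c S' := hEq ▸ hx.1
    simp only [hc, Finset.mem_sdiff] at this
    exact this.2 hx.2
  have hP : ((Finset.range 6).powersetCard 3).card = 20 := by
    rw [Finset.card_powersetCard, Finset.card_range]; decide
  have hle10 : F.card ≤ 10 := by
    have h1 : (F ∪ F.image c).card = F.card + (F.image c).card :=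
      Finset.card_union_of_disjoint hdisj
    have h2 : (F.image c).card = F.card := Finset.card_image_of_injOn hInjOn
    have h3 : (F ∪ F.image c).card ≤ 20 := by
      rw [← hP]
      exact Finset.card_le_card (Finset.union_subset hF himage)
    omega
  -- key lemma
  have key : ∀ T ⊆ Finset.range 6, T.card = 3 → T ∈ F ∨ (Finset.range 6 \ T) ∈ F := by
    intro T hT hT3
    by_contra hcon
    push_neg at hcon
    obtain ⟨hTF, hTcF⟩ := hcon
    set Tc : Finset ℕ := Finset.range 6 \ T with hTcdef
    have hTccard : Tc.card = 3 := by
      rw [hTcdef, Finset.card_sdiff_of_subset hT, Finset.card_range, hT3]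
    have hTcsub : Tc ⊆ Finset.range 6 := Finset.sdiff_subset
    set K : ℕ → Finset (Finset ℕ) :=
      fun x => F.filter (fun S => S ∩ T = {x} ∨ S ∩ Tc = {x}) with hK
    have hTunion : T ∪ Tc = Finset.range 6 := by
      rw [hTcdef, Finset.union_sdiff_of_subset hT]
    have hKcard : ∀ x ∈ Finset.range 6, 2 ≤ (K x).card := by
      intro x hx
      rw [← hTunion, Finset.mem_union] at hx
      rcases hx with hx | hx
      · -- x ∈ T ; Q = T \ {x}
        have hQsub : T \ {x} ⊆ Finset.range 6 := (Finset.sdiff_subset).trans hT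
        have hQcard : (T \ {x}).card = 2 := by
          rw [Finset.card_sdiff_of_subset (Finset.singleton_subset_iff.2 hx), hT3,
            Finset.card_singleton]
        have hsub : (F.filter fun S => Disjoint (T \ {x}) S) ⊆ K x := by
          intro S hS
          rw [Finset.mem_filter] at hS
          obtain ⟨hSF, hSd⟩ := hS
          rw [hK, Finset.mem_filter]
          refine ⟨hSF, Or.inl ?_⟩
          have hsub1 : S ∩ T ⊆ {x} := by
            intro a ha
            rw [Finset.mem_inter] at ha
            rw [Finset.mem_singleton]
            by_contra hax
            exact (Finset.disjoint_left.1 hSd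
              (Finset.mem_sdiff.2 ⟨ha.2, by simp [hax]⟩)) ha.1
          have hne : (S ∩ T).Nonempty := by
            by_contra hne
            rw [Finset.not_nonempty_iff_eq_empty] at hne
            have hsubTc : S ⊆ Tc := by
              intro a ha
              rw [hTcdef, Finset.mem_sdiff]
              refine ⟨(hmem S hSF).1 ha, fun haT => ?_⟩
              have : a ∈ S ∩ T := Finset.mem_inter.2 ⟨ha, haT⟩
              simp [hne] at this
            have : S = Tc := Finset.eq_of_subset_of_card_le hsubTc
              (by rw [hTccard, (hmem S hSF).2])
            exact hTcF (this ▸ hSF)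
          obtain ⟨a, ha⟩ := hne
          have := hsub1 ha
          rw [Finset.mem_singleton] at this
          subst this
          exact Finset.Subset.antisymm hsub1 (Finset.singleton_subset_iff.2 ha)
        calc 2 ≤ (F.filter fun S => Disjoint (T \ {x}) S).card := h2 _ hQsub hQcard
          _ ≤ (K x).card := Finset.card_le_card hsub
      · -- x ∈ Tc ; Q = Tc \ {x}
        have hQsub : Tc \ {x} ⊆ Finset.range 6 := (Finset.sdiff_subset).trans hTcsub
        have hQcard : (Tc \ {x}).card = 2 := by
          rw [Finset.card_sdiff_of_subset (Finset.singleton_subset_iff.2 hx), hTccard,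
            Finset.card_singleton]
        have hsub : (F.filter fun S => Disjoint (Tc \ {x}) S) ⊆ K x := by
          intro S hS
          rw [Finset.mem_filter] at hS
          obtain ⟨hSF, hSd⟩ := hS
          rw [hK, Finset.mem_filter]
          refine ⟨hSF, Or.inr ?_⟩
          have hsub1 : S ∩ Tc ⊆ {x} := by
            intro a ha
            rw [Finset.mem_inter] at ha
            rw [Finset.mem_singleton]
            by_contra hax
            exact (Finset.disjoint_left.1 hSd
              (Finset.mem_sdiff.2 ⟨ha.2, by simp [hax]⟩)) ha.1
          have hne : (S ∩ Tc).Nonempty := by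
            by_contra hne
            rw [Finset.not_nonempty_iff_eq_empty] at hne
            have hsubT : S ⊆ T := by
              intro a ha
              by_contra haT
              have haTc : a ∈ Tc := by
                rw [hTcdef, Finset.mem_sdiff]
                exact ⟨(hmem S hSF).1 ha, haT⟩
              have : a ∈ S ∩ Tc := Finset.mem_inter.2 ⟨ha, haTc⟩
              simp [hne] at this
            have : S = T := Finset.eq_of_subset_of_card_le hsubT
              (by rw [hT3, (hmem S hSF).2])
            exact hTF (this ▸ hSF)
          obtain ⟨a, ha⟩ := hne
          have := hsub1 ha
          rw [Finset.mem_singleton] at this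
          subst this
          exact Finset.Subset.antisymm hsub1 (Finset.singleton_subset_iff.2 ha)
        calc 2 ≤ (F.filter fun S => Disjoint (Tc \ {x}) S).card := h2 _ hQsub hQcard
          _ ≤ (K x).card := Finset.card_le_card hsub
    have hTdisj : Disjoint T Tc := Finset.disjoint_sdiff
    have hKdisj : ∀ x ∈ Finset.range 6, ∀ y ∈ Finset.range 6, x ≠ y →
        Disjoint (K x) (K y) := by
      intro x hx y hy hxy
      rw [Finset.disjoint_left]
      intro S hSx hSy
      rw [hK, Finset.mem_filter] at hSx hSy
      obtain ⟨hSF, hx'⟩ := hSx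
      obtain ⟨-, hy'⟩ := hSy
      have hcard3 := (hmem S hSF).2
      have hSsub := (hmem S hSF).1
      have hSsplit : S = (S ∩ T) ∪ (S ∩ Tc) := by
        rw [← Finset.inter_union_distrib_left, hTunion]
        exact (Finset.inter_eq_left.2 hSsub).symm
      rcases hx' with h1 | h1 <;> rcases hy' with h2 | h2
      · exact hxy (by rw [h1] at h2; exact Finset.singleton_injective h2)
      · -- S∩T = {x}, S∩Tc = {y} : S = {x,y}, card ≤ 2
        have : S = {x} ∪ {y} := by rw [hSsplit, h1, h2]
        have : S.card ≤ 2 := by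
          rw [this]
          exact le_trans (Finset.card_union_le _ _) (by simp)
        omega
      · have : S = {y} ∪ {x} := by rw [hSsplit, h2, h1]
        have : S.card ≤ 2 := by
          rw [this]
          exact le_trans (Finset.card_union_le _ _) (by simp)
        omega
      · exact hxy (by rw [h1] at h2; exact Finset.singleton_injective h2)
    have h12 : 12 ≤ F.card := by
      calc (12 : ℕ) = ∑ _x ∈ Finset.range 6, 2 := by simp
        _ ≤ ∑ x ∈ Finset.range 6, (K x).card := Finset.sum_le_sum hKcard
        _ = ((Finset.range 6).biUnion K).card := (Finset.card_biUnion hKdisj).symm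
        _ ≤ F.card := Finset.card_le_card (by
            intro S hS
            rw [Finset.mem_biUnion] at hS
            obtain ⟨x, -, hx⟩ := hS
            exact Finset.mem_filter.1 hx |>.1)
    omega
  have hnotboth : ∀ T ⊆ Finset.range 6, T.card = 3 →
      ¬(T ∈ F ∧ (Finset.range 6 \ T) ∈ F) := by
    rintro T hT hT3 ⟨h1, h2'⟩
    obtain ⟨x, hx⟩ := hint T h1 _ h2'
    rw [Finset.mem_inter, Finset.mem_sdiff] at hx
    exact hx.2.2 hx.1
  constructor
  · -- card = 10
    have hsup : (Finset.range 6).powersetCard 3 ⊆ F ∪ F.image c := by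
      intro S hS
      rw [Finset.mem_powersetCard] at hS
      rcases key S hS.1 hS.2 with h | h
      · exact Finset.mem_union_left _ h
      · refine Finset.mem_union_right _ ?_
        rw [Finset.mem_image]
        exact ⟨_, h, hcc S hS.1⟩
    have h1 : (F ∪ F.image c).card = F.card + (F.image c).card :=
      Finset.card_union_of_disjoint hdisj
    have h2' : (F.image c).card = F.card := Finset.card_image_of_injOn hInjOn
    have h3 : 20 ≤ (F ∪ F.image c).card := by
      rw [← hP]; exact Finset.card_le_card hsup
    omega
  · intro T hT hT3
    constructor
    · intro hTF hTcF
      exact hnotboth T hT hT3 ⟨hTF, hTcF⟩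
    · intro hTcF
      rcases key T hT hT3 with h | h
      · exact h
      · exact absurd h hTcF
end

section
/- If F is a 3-uniform intersecting family with β_{0,2}(F) ≥ 2 that contains two triples sharing exactly two elements, then the ground set of F has size at most 6. -/
lemma exists_third {S : Finset ℕ} {x y : ℕ} (h3 : S.card = 3) (hx : x ∈ S)
    (hy : y ∈ S) (hxy : x ≠ y) : ∃ z, z ≠ x ∧ z ≠ y ∧ S = {x, y, z} := by
  obtain ⟨a, b, c, hab, hac, hbc, hS⟩ := Finset.card_eq_three.mp h3
  subst hS
  simp only [Finset.mem_insert, Finset.mem_singleton] at hx hy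
  rcases hx with rfl | rfl | rfl <;> rcases hy with rfl | rfl | rfl <;>
    first
    | exact (hxy rfl).elim
    | exact ⟨a, by omega, by omega, by ext t; simp only [Finset.mem_insert, Finset.mem_singleton]; try omega⟩
    | exact ⟨b, by omega, by omega, by ext t; simp only [Finset.mem_insert, Finset.mem_singleton]; try omega⟩
    | exact ⟨c, by omega, by omega, by ext t; simp only [Finset.mem_insert, Finset.mem_singleton]; try omega⟩

lemma eq_of_three {S : Finset ℕ} {u v w : ℕ} (h3 : S.card = 3) (hu : u ∈ S)
    (hv : v ∈ S) (hw : w ∈ S) (huv : u ≠ v) (huw : u ≠ w) (hvw : v ≠ w) :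
    S = {u, v, w} := by
  refine (Finset.eq_of_subset_of_card_le ?_ ?_).symm
  · intro t ht; simp at ht; rcases ht with rfl | rfl | rfl <;> assumption
  · rw [h3, Finset.card_insert_of_notMem (by simp; omega),
      Finset.card_insert_of_notMem (by simp; omega), Finset.card_singleton]

lemma card_six_le (x y a b c d : ℕ) : ({x, y, a, b, c, d} : Finset ℕ).card ≤ 6 := by
  have h1 := Finset.card_insert_le x ({y, a, b, c, d} : Finset ℕ)
  have h2 := Finset.card_insert_le y ({a, b, c, d} : Finset ℕ)
  have h3 := Finset.card_insert_le a ({b, c, d} : Finset ℕ)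
  have h4 := Finset.card_insert_le b ({c, d} : Finset ℕ)
  have h5 := Finset.card_insert_le c ({d} : Finset ℕ)
  have h6 : ({d} : Finset ℕ).card = 1 := Finset.card_singleton d
  omega

set_option maxHeartbeats 1600000 in
/-- A 3-uniform intersecting family with β_{0,2} ≥ 2 containing two triples sharing
exactly two elements has ground set of size at most 6. -/
theorem ground_le_six_of_two_shared (F : Finset (Finset ℕ))
    (hunif : ∀ A ∈ F, A.card = 3)
    (hint : Intersecting F)
    (hbeta : ∀ Q ⊆ F.sup id, Q.card = 2 → 2 ≤ (F.filter fun S => Disjoint S Q).card)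
    (hpair : ∃ A ∈ F, ∃ B ∈ F, (A ∩ B).card = 2) :
    (F.sup id).card ≤ 6 := by
  classical
  obtain ⟨A, hA, B, hB, hAB2⟩ := hpair
  obtain ⟨x, y, hxy, hIxy⟩ := Finset.card_eq_two.mp hAB2
  have hxAB : x ∈ A ∩ B := by rw [hIxy]; simp
  have hyAB : y ∈ A ∩ B := by rw [hIxy]; simp
  rw [Finset.mem_inter] at hxAB hyAB
  obtain ⟨a, hax, hay, hAeq⟩ := exists_third (hunif A hA) hxAB.1 hyAB.1 hxy
  obtain ⟨b, hbx, hby, hBeq⟩ := exists_third (hunif B hB) hxAB.2 hyAB.2 hxy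
  have haA : a ∈ A := by rw [hAeq]; simp
  have hbB : b ∈ B := by rw [hBeq]; simp
  have haB : a ∉ B := by
    intro h
    have : a ∈ A ∩ B := Finset.mem_inter.mpr ⟨haA, h⟩
    rw [hIxy] at this; simp at this; omega
  have hbA : b ∉ A := by
    intro h
    have : b ∈ A ∩ B := Finset.mem_inter.mpr ⟨h, hbB⟩
    rw [hIxy] at this; simp at this; omega
  have hab : a ≠ b := fun h => hbA (h ▸ haA)
  have hsub : ∀ S ∈ F, S ⊆ F.sup id := fun S hS => Finset.le_sup (f := id) hS
  -- members disjoint from {x,y} contain both a and b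
  have key1 : ∀ S ∈ F, Disjoint S ({x, y} : Finset ℕ) → a ∈ S ∧ b ∈ S := by
    intro S hS hd
    constructor
    · obtain ⟨t, ht⟩ := hint S hS A hA
      rw [Finset.mem_inter, hAeq] at ht
      obtain ⟨htS, htA⟩ := ht
      simp only [Finset.mem_insert, Finset.mem_singleton] at htA
      have hn : t ∉ ({x, y} : Finset ℕ) := Finset.disjoint_left.mp hd htS
      simp only [Finset.mem_insert, Finset.mem_singleton] at hn
      have : t = a := by omega
      exact this ▸ htS
    · obtain ⟨t, ht⟩ := hint S hS B hB
      rw [Finset.mem_inter, hBeq] at ht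
      obtain ⟨htS, htB⟩ := ht
      simp only [Finset.mem_insert, Finset.mem_singleton] at htB
      have hn : t ∉ ({x, y} : Finset ℕ) := Finset.disjoint_left.mp hd htS
      simp only [Finset.mem_insert, Finset.mem_singleton] at hn
      have : t = b := by omega
      exact this ▸ htS
  -- apply hbeta with Q = {x,y}
  have hQ1 : ({x, y} : Finset ℕ) ⊆ F.sup id := by
    intro t ht
    simp only [Finset.mem_insert, Finset.mem_singleton] at ht
    rcases ht with rfl | rfl
    · exact hsub A hA hxAB.1
    · exact hsub A hA hyAB.1
  have h2 := hbeta {x, y} hQ1 (Finset.card_pair hxy)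
  obtain ⟨S1, hS1, S2, hS2, hS12⟩ := Finset.one_lt_card.mp (lt_of_lt_of_le one_lt_two h2)
  rw [Finset.mem_filter] at hS1 hS2
  obtain ⟨ha1, hb1⟩ := key1 S1 hS1.1 hS1.2
  obtain ⟨ha2, hb2⟩ := key1 S2 hS2.1 hS2.2
  obtain ⟨c, hca, hcb, hS1eq⟩ := exists_third (hunif S1 hS1.1) ha1 hb1 hab
  obtain ⟨d, hda, hdb, hS2eq⟩ := exists_third (hunif S2 hS2.1) ha2 hb2 hab
  have hcS1 : c ∈ S1 := by rw [hS1eq]; simp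
  have hdS2 : d ∈ S2 := by rw [hS2eq]; simp
  have hcx : c ≠ x := by
    intro h
    exact absurd (by simp [h] : c ∈ ({x, y} : Finset ℕ)) (Finset.disjoint_left.mp hS1.2 hcS1)
  have hcy : c ≠ y := by
    intro h
    exact absurd (by simp [h] : c ∈ ({x, y} : Finset ℕ)) (Finset.disjoint_left.mp hS1.2 hcS1)
  have hdx : d ≠ x := by
    intro h
    exact absurd (by simp [h] : d ∈ ({x, y} : Finset ℕ)) (Finset.disjoint_left.mp hS2.2 hdS2)
  have hdy : d ≠ y := by
    intro h
    exact absurd (by simp [h] : d ∈ ({x, y} : Finset ℕ)) (Finset.disjoint_left.mp hS2.2 hdS2)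
  have hcd : c ≠ d := by
    intro h
    exact hS12 (by rw [hS1eq, hS2eq, h])
  -- members disjoint from {a,b} are {c,d,e} with e ∈ {x,y}
  have key2 : ∀ T ∈ F, Disjoint T ({a, b} : Finset ℕ) →
      ∃ e, (e = x ∨ e = y) ∧ T = {c, d, e} := by
    intro T hT hd
    have hcT : c ∈ T := by
      obtain ⟨t, ht⟩ := hint T hT S1 hS1.1
      rw [Finset.mem_inter, hS1eq] at ht
      obtain ⟨htT, htm⟩ := ht
      simp only [Finset.mem_insert, Finset.mem_singleton] at htm
      have hn : t ∉ ({a, b} : Finset ℕ) := Finset.disjoint_left.mp hd htT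
      simp only [Finset.mem_insert, Finset.mem_singleton] at hn
      have : t = c := by omega
      exact this ▸ htT
    have hdT : d ∈ T := by
      obtain ⟨t, ht⟩ := hint T hT S2 hS2.1
      rw [Finset.mem_inter, hS2eq] at ht
      obtain ⟨htT, htm⟩ := ht
      simp only [Finset.mem_insert, Finset.mem_singleton] at htm
      have hn : t ∉ ({a, b} : Finset ℕ) := Finset.disjoint_left.mp hd htT
      simp only [Finset.mem_insert, Finset.mem_singleton] at hn
      have : t = d := by omega
      exact this ▸ htT
    obtain ⟨e, hec, hed, hTeq⟩ := exists_third (hunif T hT) hcT hdT hcd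
    refine ⟨e, ?_, hTeq⟩
    obtain ⟨t, ht⟩ := hint T hT A hA
    rw [Finset.mem_inter, hAeq] at ht
    obtain ⟨htT, htm⟩ := ht
    simp only [Finset.mem_insert, Finset.mem_singleton] at htm
    have hn : t ∉ ({a, b} : Finset ℕ) := Finset.disjoint_left.mp hd htT
    simp only [Finset.mem_insert, Finset.mem_singleton] at hn
    have htT' : t ∈ ({c, d, e} : Finset ℕ) := hTeq ▸ htT
    simp only [Finset.mem_insert, Finset.mem_singleton] at htT'
    omega
  -- apply hbeta with Q = {a,b}
  have hQ2 : ({a, b} : Finset ℕ) ⊆ F.sup id := by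
    intro t ht
    simp only [Finset.mem_insert, Finset.mem_singleton] at ht
    rcases ht with rfl | rfl
    · exact hsub A hA haA
    · exact hsub B hB hbB
  have h2' := hbeta {a, b} hQ2 (Finset.card_pair hab)
  obtain ⟨T1, hT1, T2, hT2, hT12⟩ := Finset.one_lt_card.mp (lt_of_lt_of_le one_lt_two h2')
  rw [Finset.mem_filter] at hT1 hT2
  obtain ⟨e1, he1, hT1eq⟩ := key2 T1 hT1.1 hT1.2
  obtain ⟨e2, he2, hT2eq⟩ := key2 T2 hT2.1 hT2.2
  have hne : e1 ≠ e2 := by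
    intro h
    exact hT12 (by rw [hT1eq, hT2eq, h])
  have hUV : ({c, d, x} : Finset ℕ) ∈ F ∧ ({c, d, y} : Finset ℕ) ∈ F := by
    rcases he1 with rfl | rfl <;> rcases he2 with rfl | rfl
    · exact (hne rfl).elim
    · exact ⟨hT1eq ▸ hT1.1, hT2eq ▸ hT2.1⟩
    · exact ⟨hT2eq ▸ hT2.1, hT1eq ▸ hT1.1⟩
    · exact (hne rfl).elim
  obtain ⟨hU, hV⟩ := hUV
  -- every member of F is inside {x,y,a,b,c,d}
  have main : ∀ S ∈ F, S ⊆ ({x, y, a, b, c, d} : Finset ℕ) := by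
    intro S hS
    have f1 : (∃ t ∈ S, t = x ∨ t = y) ∨ (a ∈ S ∧ b ∈ S) := by
      obtain ⟨t, ht⟩ := hint S hS A hA
      rw [Finset.mem_inter, hAeq] at ht
      obtain ⟨htS, htA⟩ := ht
      simp only [Finset.mem_insert, Finset.mem_singleton] at htA
      rcases htA with rfl | rfl | rfl
      · exact Or.inl ⟨t, htS, Or.inl rfl⟩
      · exact Or.inl ⟨t, htS, Or.inr rfl⟩
      · obtain ⟨u, hu⟩ := hint S hS B hB
        rw [Finset.mem_inter, hBeq] at hu
        obtain ⟨huS, huB⟩ := hu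
        simp only [Finset.mem_insert, Finset.mem_singleton] at huB
        rcases huB with rfl | rfl | rfl
        · exact Or.inl ⟨u, huS, Or.inl rfl⟩
        · exact Or.inl ⟨u, huS, Or.inr rfl⟩
        · exact Or.inr ⟨htS, huS⟩
    have f2 : (∃ t ∈ S, t = a ∨ t = b) ∨ (c ∈ S ∧ d ∈ S) := by
      obtain ⟨t, ht⟩ := hint S hS S1 hS1.1
      rw [Finset.mem_inter, hS1eq] at ht
      obtain ⟨htS, htA⟩ := ht
      simp only [Finset.mem_insert, Finset.mem_singleton] at htA
      rcases htA with rfl | rfl | rfl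
      · exact Or.inl ⟨t, htS, Or.inl rfl⟩
      · exact Or.inl ⟨t, htS, Or.inr rfl⟩
      · obtain ⟨u, hu⟩ := hint S hS S2 hS2.1
        rw [Finset.mem_inter, hS2eq] at hu
        obtain ⟨huS, huB⟩ := hu
        simp only [Finset.mem_insert, Finset.mem_singleton] at huB
        rcases huB with rfl | rfl | rfl
        · exact Or.inl ⟨u, huS, Or.inl rfl⟩
        · exact Or.inl ⟨u, huS, Or.inr rfl⟩
        · exact Or.inr ⟨htS, huS⟩
    have f3 : (∃ t ∈ S, t = c ∨ t = d) ∨ (x ∈ S ∧ y ∈ S) := by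
      obtain ⟨t, ht⟩ := hint S hS _ hU
      rw [Finset.mem_inter] at ht
      obtain ⟨htS, htA⟩ := ht
      simp only [Finset.mem_insert, Finset.mem_singleton] at htA
      rcases htA with rfl | rfl | rfl
      · exact Or.inl ⟨t, htS, Or.inl rfl⟩
      · exact Or.inl ⟨t, htS, Or.inr rfl⟩
      · obtain ⟨u, hu⟩ := hint S hS _ hV
        rw [Finset.mem_inter] at hu
        obtain ⟨huS, huB⟩ := hu
        simp only [Finset.mem_insert, Finset.mem_singleton] at huB
        rcases huB with rfl | rfl | rfl
        · exact Or.inl ⟨u, huS, Or.inl rfl⟩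
        · exact Or.inl ⟨u, huS, Or.inr rfl⟩
        · exact Or.inr ⟨htS, huS⟩
    rcases f1 with ⟨t1, ht1S, ht1⟩ | ⟨haS, hbS⟩
    · rcases f2 with ⟨t2, ht2S, ht2⟩ | ⟨hcS, hdS⟩
      · rcases f3 with ⟨t3, ht3S, ht3⟩ | ⟨hxS, hyS⟩
        · have hE := eq_of_three (hunif S hS) ht1S ht2S ht3S
            (by clear * - ht1 ht2 hax hay hbx hby; omega)
            (by clear * - ht1 ht3 hcx hcy hdx hdy; omega)
            (by clear * - ht2 ht3 hca hcb hda hdb; omega)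
          rw [hE]; intro u hu
          simp only [Finset.mem_insert, Finset.mem_singleton] at hu ⊢
          clear * - hu ht1 ht2 ht3
          omega
        · have hE := eq_of_three (hunif S hS) hxS hyS ht2S
            (by clear * - hxy; omega)
            (by clear * - ht2 hax hbx; omega)
            (by clear * - ht2 hay hby; omega)
          rw [hE]; intro u hu
          simp only [Finset.mem_insert, Finset.mem_singleton] at hu ⊢
          clear * - hu ht2
          omega
      · have hE := eq_of_three (hunif S hS) ht1S hcS hdS
          (by clear * - ht1 hcx hcy; omega)
          (by clear * - ht1 hdx hdy; omega)
          (by clear * - hcd; omega)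
        rw [hE]; intro u hu
        simp only [Finset.mem_insert, Finset.mem_singleton] at hu ⊢
        clear * - hu ht1
        omega
    · rcases f3 with ⟨t3, ht3S, ht3⟩ | ⟨hxS, hyS⟩
      · have hE := eq_of_three (hunif S hS) haS hbS ht3S
          (by clear * - hab; omega)
          (by clear * - ht3 hca hda; omega)
          (by clear * - ht3 hcb hdb; omega)
        rw [hE]; intro u hu
        simp only [Finset.mem_insert, Finset.mem_singleton] at hu ⊢
        clear * - hu ht3
        omega
      · exfalso
        have hsub4 : ({a, b, x, y} : Finset ℕ) ⊆ S := by
          intro u hu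
          simp only [Finset.mem_insert, Finset.mem_singleton] at hu
          rcases hu with rfl | rfl | rfl | rfl <;> assumption
        have hle := Finset.card_le_card hsub4
        have hc4 : ({a, b, x, y} : Finset ℕ).card = 4 := by
          clear * - hab hax hay hbx hby hxy
          rw [Finset.card_insert_of_notMem (by simp; omega),
            Finset.card_insert_of_notMem (by simp; omega),
            Finset.card_insert_of_notMem (by simp; omega), Finset.card_singleton]
        have h3 := hunif S hS
        clear * - hle hc4 h3
        omega
  have hsup : F.sup id ≤ ({x, y, a, b, c, d} : Finset ℕ) :=
    Finset.sup_le fun S hS => main S hS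
  exact le_trans (Finset.card_le_card hsup) (card_six_le x y a b c d)
end

section
/- Let k ≥ p + 2 and define F = {S ∈ binomial([n],k) : |S ∩ {1,2,3}| ≥ 2}. Then F is intersecting and for n sufficiently large, β_{p,1}(F) = binomial(n - 3 - p, k - 2 - p). -/
lemma choose_le_add (a b d : ℕ) : a.choose b ≤ (a+d).choose (b+d) := by
  induction d with
  | zero => simp
  | succ d ih =>
    calc a.choose b ≤ (a+d).choose (b+d) := ih
    _ ≤ (a+d+1).choose (b+d+1) := by
        rw [Nat.choose_succ_succ]; exact Nat.le_add_right _ _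

lemma card_filter_super (k : ℕ) (U C D : Finset ℕ) (hCU : C ⊆ U) (hCD : Disjoint C D)
    (hkC : C.card ≤ k) :
    ((U.powersetCard k).filter fun S => C ⊆ S ∧ Disjoint D S).card
      = (U \ (C ∪ D)).card.choose (k - C.card) := by
  rw [← Finset.card_powersetCard]
  apply Finset.card_bij (fun S _ => S \ C)
  · intro S hS
    simp only [Finset.mem_filter, Finset.mem_powersetCard] at hS
    obtain ⟨⟨hSU, hSk⟩, hCS, hDS⟩ := hS
    rw [Finset.mem_powersetCard]
    constructor
    · intro x hx
      rw [Finset.mem_sdiff] at hx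
      rw [Finset.mem_sdiff, Finset.mem_union]
      refine ⟨hSU hx.1, ?_⟩
      push_neg
      exact ⟨hx.2, fun hxD => Finset.disjoint_left.mp hDS hxD hx.1⟩
    · rw [Finset.card_sdiff_of_subset hCS, hSk]
  · intro S₁ h₁ S₂ h₂ he
    simp only [Finset.mem_filter] at h₁ h₂
    have e1 : S₁ = (S₁ \ C) ∪ C := by
      rw [Finset.sdiff_union_self_eq_union, Finset.union_eq_left.mpr h₁.2.1]
    have e2 : S₂ = (S₂ \ C) ∪ C := by
      rw [Finset.sdiff_union_self_eq_union, Finset.union_eq_left.mpr h₂.2.1]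
    rw [e1, e2, he]
  · intro T hT
    rw [Finset.mem_powersetCard] at hT
    obtain ⟨hTU, hTk⟩ := hT
    have hTC : Disjoint T C := by
      refine Finset.disjoint_left.mpr fun x hxT hxC => ?_
      have := hTU hxT
      rw [Finset.mem_sdiff, Finset.mem_union] at this
      exact this.2 (Or.inl hxC)
    refine ⟨T ∪ C, ?_, ?_⟩
    · simp only [Finset.mem_filter, Finset.mem_powersetCard]
      refine ⟨⟨?_, ?_⟩, Finset.subset_union_right, ?_⟩
      · refine Finset.union_subset (fun x hx => ?_) hCU
        have := hTU hx
        rw [Finset.mem_sdiff] at this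
        exact this.1
      · rw [Finset.card_union_of_disjoint hTC, hTk]
        omega
      · rw [Finset.disjoint_union_right]
        constructor
        · refine Finset.disjoint_right.mpr fun x hxT hxD => ?_
          have := hTU hxT
          rw [Finset.mem_sdiff, Finset.mem_union] at this
          exact this.2 (Or.inr hxD)
        · exact hCD.symm
    · rw [Finset.union_sdiff_right, Finset.sdiff_eq_self_of_disjoint hTC]



/-- The family of k-sets in [n] meeting {0,1,2} in at least 2 elements is intersecting,
and for large n its (p,1)-dömdödöm equals binom(n-3-p, k-2-p). -/
theorem beta_p_one_lower (p k : ℕ) (hk : p + 2 ≤ k) :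
    (∀ n : ℕ, Intersecting
      (((Finset.range n).powersetCard k).filter fun S =>
        2 ≤ (S ∩ ({0, 1, 2} : Finset ℕ)).card)) ∧
    ∃ n₀ : ℕ, ∀ n ≥ n₀,
      beta n p 1 (((Finset.range n).powersetCard k).filter fun S =>
        2 ≤ (S ∩ ({0, 1, 2} : Finset ℕ)).card) =
      Nat.choose (n - 3 - p) (k - 2 - p) := by
  constructor
  · -- intersecting
    intro n S hS T hT
    simp only [Finset.mem_filter] at hS hT
    have hu : ((S ∩ {0,1,2}) ∪ (T ∩ {0,1,2})).card ≤ 3 := by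
      calc _ ≤ (({0,1,2} : Finset ℕ)).card := by
            apply Finset.card_le_card
            intro x hx
            rw [Finset.mem_union, Finset.mem_inter, Finset.mem_inter] at hx
            tauto
      _ = 3 := by decide
    have hi := Finset.card_inter_add_card_union (S ∩ {0,1,2}) (T ∩ {0,1,2})
    have hpos : 0 < ((S ∩ {0,1,2}) ∩ (T ∩ {0,1,2})).card := by omega
    rw [Finset.card_pos] at hpos
    refine hpos.mono fun x hx => ?_
    simp only [Finset.mem_inter] at hx ⊢
    exact ⟨hx.1.1, hx.2.1⟩
  · refine ⟨p + k + 3, fun n hn => ?_⟩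
    set Fn := ((Finset.range n).powersetCard k).filter fun S =>
        2 ≤ (S ∩ ({0, 1, 2} : Finset ℕ)).card with hFn
    set v := Nat.choose (n - 3 - p) (k - 2 - p) with hv
    -- witness
    set A₀ := Finset.Ico 3 (p+3) with hA₀
    set C₀ := insert 1 (insert 2 A₀) with hC₀
    have h1A : (1 : ℕ) ∉ A₀ := by simp [hA₀]
    have h2A : (2 : ℕ) ∉ A₀ := by simp [hA₀]
    have hC₀card : C₀.card = p + 2 := by
      rw [hC₀, Finset.card_insert_of_notMem (by simp [h1A, h2A]),
        Finset.card_insert_of_notMem h2A, Nat.card_Ico]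
      omega
    have hC₀sub : C₀ ⊆ Finset.range n := by
      intro x hx
      simp only [hC₀, Finset.mem_insert, hA₀, Finset.mem_Ico] at hx
      rw [Finset.mem_range]
      omega
    have hC₀disj : Disjoint C₀ ({0} : Finset ℕ) := by
      simp only [Finset.disjoint_singleton_right, hC₀, Finset.mem_insert, hA₀,
        Finset.mem_Ico]
      omega
    have hfam : famAB Fn A₀ {0} =
        ((Finset.range n).powersetCard k).filter fun S => C₀ ⊆ S ∧ Disjoint ({0} : Finset ℕ) S := by
      rw [famAB, hFn, Finset.filter_filter]
      apply Finset.filter_congr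
      intro S _
      constructor
      · rintro ⟨h2, hAS, hDS⟩
        have h0S : (0 : ℕ) ∉ S := by
          intro h
          exact Finset.disjoint_left.mp hDS (Finset.mem_singleton_self 0) h
        have hsub : S ∩ {0,1,2} ⊆ ({1,2} : Finset ℕ) := by
          intro x hx
          simp only [Finset.mem_inter, Finset.mem_insert, Finset.mem_singleton] at hx ⊢
          rcases hx.2 with h|h|h
          · exact absurd (h ▸ hx.1) h0S
          · exact Or.inl h
          · exact Or.inr h
        have heq : S ∩ {0,1,2} = ({1,2} : Finset ℕ) :=
          Finset.eq_of_subset_of_card_le hsub (by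
            have : (({1,2} : Finset ℕ)).card = 2 := by decide
            omega)
        have h1S : (1 : ℕ) ∈ S := by
          have h : (1:ℕ) ∈ ({1,2} : Finset ℕ) := by decide
          rw [← heq, Finset.mem_inter] at h
          exact h.1
        have h2S : (2 : ℕ) ∈ S := by
          have h : (2:ℕ) ∈ ({1,2} : Finset ℕ) := by decide
          rw [← heq, Finset.mem_inter] at h
          exact h.1
        exact ⟨by rw [hC₀]; exact Finset.insert_subset h1S (Finset.insert_subset h2S hAS), hDS⟩
      · rintro ⟨hCS, hDS⟩
        have h1S : (1 : ℕ) ∈ S := hCS (by simp [hC₀])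
        have h2S : (2 : ℕ) ∈ S := hCS (by simp [hC₀])
        refine ⟨?_, fun x hx => hCS (by simp [hC₀, hx]), hDS⟩
        have : ({1,2} : Finset ℕ) ⊆ S ∩ {0,1,2} := by
          intro x hx
          simp only [Finset.mem_insert, Finset.mem_singleton] at hx
          rcases hx with h|h <;> subst h <;> simp [h1S, h2S]
        calc (2:ℕ) = (({1,2} : Finset ℕ)).card := by decide
        _ ≤ _ := Finset.card_le_card this
    have hwit : v = (famAB Fn A₀ {0}).card := by
      rw [hfam, card_filter_super k _ _ _ hC₀sub hC₀disj (by omega)]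
      have hUsub : C₀ ∪ {0} ⊆ Finset.range n :=
        Finset.union_subset hC₀sub (by simp [Finset.mem_range]; omega)
      rw [Finset.card_sdiff_of_subset hUsub, Finset.card_union_of_disjoint hC₀disj,
        Finset.card_range, Finset.card_singleton, hC₀card, hv]
      congr 1 <;> omega
    have hmem : v ∈ {m | ∃ A B : Finset ℕ, A ⊆ Finset.range n ∧ B ⊆ Finset.range n ∧
        Disjoint A B ∧ A.card = p ∧ B.card = 1 ∧ m = (famAB Fn A B).card} := by
      refine ⟨A₀, {0}, ?_, ?_, ?_, ?_, rfl, hwit⟩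
      · intro x hx
        simp only [hA₀, Finset.mem_Ico] at hx
        rw [Finset.mem_range]; omega
      · simp [Finset.mem_range]; omega
      · simp only [Finset.disjoint_singleton_right, hA₀, Finset.mem_Ico]; omega
      · rw [hA₀, Nat.card_Ico]; omega
    -- lower bound
    have hlb : ∀ m ∈ {m | ∃ A B : Finset ℕ, A ⊆ Finset.range n ∧ B ⊆ Finset.range n ∧
        Disjoint A B ∧ A.card = p ∧ B.card = 1 ∧ m = (famAB Fn A B).card}, v ≤ m := by
      rintro m ⟨A, B, hA, hB, hAB, hAc, hBc, rfl⟩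
      have hT' : 2 ≤ (({0,1,2} : Finset ℕ) \ B).card := by
        have h1 := Finset.le_card_sdiff B ({0,1,2} : Finset ℕ)
        have h2 : (({0,1,2} : Finset ℕ)).card = 3 := by decide
        omega
      obtain ⟨E, hE, hEc⟩ := Finset.exists_subset_card_eq hT'
      set C := A ∪ E with hC
      have hAC : A ⊆ C := Finset.subset_union_left
      have hCsub : C ⊆ Finset.range n := by
        refine Finset.union_subset hA fun x hx => ?_
        have := hE hx
        rw [Finset.mem_sdiff] at this
        have : x ∈ ({0,1,2} : Finset ℕ) := this.1
        simp only [Finset.mem_insert, Finset.mem_singleton] at this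
        rw [Finset.mem_range]
        omega
      have hCB : Disjoint C B := by
        refine Finset.disjoint_union_left.mpr ⟨hAB, ?_⟩
        refine Finset.disjoint_left.mpr fun x hxE hxB => ?_
        have := hE hxE
        rw [Finset.mem_sdiff] at this
        exact this.2 hxB
      have hCcard_le : C.card ≤ p + 2 := by
        rw [hC]
        have := Finset.card_union_le A E
        omega
      have hCcard_ge : p ≤ C.card := hAc ▸ Finset.card_le_card hAC
      have hsubfam : ((Finset.range n).powersetCard k).filter
          (fun S => C ⊆ S ∧ Disjoint B S) ⊆ famAB Fn A B := by
        rw [famAB, hFn, Finset.filter_filter]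
        refine Finset.monotone_filter_right _ fun S _ hS => ?_
        obtain ⟨hCS, hBS⟩ := hS
        refine ⟨?_, hAC.trans hCS, hBS⟩
        have hEsub : E ⊆ S ∩ {0,1,2} := by
          intro x hx
          rw [Finset.mem_inter]
          refine ⟨hCS (Finset.subset_union_right hx), ?_⟩
          have := hE hx
          rw [Finset.mem_sdiff] at this
          exact this.1
        calc (2:ℕ) = E.card := hEc.symm
        _ ≤ _ := Finset.card_le_card hEsub
      have hcount : (((Finset.range n).powersetCard k).filter
          (fun S => C ⊆ S ∧ Disjoint B S)).card = (n - (C.card + 1)).choose (k - C.card) := by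
        rw [card_filter_super k _ _ _ hCsub hCB (by omega)]
        have hUsub : C ∪ B ⊆ Finset.range n := Finset.union_subset hCsub hB
        rw [Finset.card_sdiff_of_subset hUsub, Finset.card_union_of_disjoint hCB,
          Finset.card_range, hBc]
      calc v ≤ (n - (C.card + 1)).choose (k - C.card) := by
            rw [hv]
            have := choose_le_add (n - 3 - p) (k - 2 - p) (p + 2 - C.card)
            have e1 : n - 3 - p + (p + 2 - C.card) = n - (C.card + 1) := by omega
            have e2 : k - 2 - p + (p + 2 - C.card) = k - C.card := by omega
            rwa [e1, e2] at this
      _ = (((Finset.range n).powersetCard k).filter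
            (fun S => C ⊆ S ∧ Disjoint B S)).card := hcount.symm
      _ ≤ (famAB Fn A B).card := Finset.card_le_card hsubfam
    rw [beta]
    exact le_antisymm (Nat.sInf_le hmem) (hlb _ (Nat.sInf_mem ⟨v, hmem⟩))
end

section
/- For fixed k ≥ p + 2 and all sufficiently large n, every intersecting family F ⊆ binomial([n],k) satisfies β_{p,1}(F) ≤ binomial(n - 3 - p, k - 2 - p). -/
open Finset

/-- The number of `k`-subsets of `s` containing a fixed set `t`. -/
lemma card_filter_superset_le (s t : Finset ℕ) (k : ℕ) :
    ((s.powersetCard k).filter (fun S => t ⊆ S)).card ≤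
      Nat.choose (s.card - t.card) (k - t.card) := by
  by_cases hts : t ⊆ s
  · have h : ((s.powersetCard k).filter (fun S => t ⊆ S)).card ≤
        ((s \ t).powersetCard (k - t.card)).card := by
      apply Finset.card_le_card_of_injOn (fun S => S \ t)
      · intro S hS
        simp only [Finset.mem_coe, Finset.mem_filter, Finset.mem_powersetCard] at hS ⊢
        obtain ⟨⟨hSs, hSc⟩, htS⟩ := hS
        exact ⟨Finset.sdiff_subset_sdiff hSs le_rfl,
          by rw [Finset.card_sdiff_of_subset htS, hSc]⟩
      · intro S₁ h₁ S₂ h₂ h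
        simp only [Finset.coe_filter, Set.mem_setOf_eq, Finset.mem_powersetCard] at h₁ h₂
        calc S₁ = S₁ \ t ∪ t := (Finset.sdiff_union_of_subset h₁.2).symm
        _ = S₂ \ t ∪ t := by simp only at h; rw [h]
        _ = S₂ := Finset.sdiff_union_of_subset h₂.2
    rwa [Finset.card_powersetCard, Finset.card_sdiff_of_subset hts] at h
  · have : ((s.powersetCard k).filter (fun S => t ⊆ S)) = ∅ := by
      apply Finset.filter_eq_empty_iff.2
      intro S hS htS
      rw [Finset.mem_powersetCard] at hS
      exact hts (htS.trans hS.1)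
    simp [this]

lemma arith_D (p k : ℕ) (hk : p + 2 ≤ k) (hk3 : 3 ≤ k) :
    ∀ n ≥ 2^k * (k^3 * Nat.choose k p * p.factorial * (k-2-p).factorial + 1) + 2*k + p + 10,
      k^3 * Nat.choose (n-3) (k-3) * Nat.choose k p <
      Nat.choose (n-1) p * (Nat.choose (n-3-p) (k-2-p) + 1) := by
  intro n hn
  set M := k^3 * Nat.choose k p * p.factorial * (k-2-p).factorial with hM
  set c := p.factorial * (k-2-p).factorial with hc
  have hcpos : 0 < c := Nat.mul_pos p.factorial_pos (k-2-p).factorial_pos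
  have h2k : 2*k ≤ n := by omega
  have hnk1 : 0 < n - k := by omega
  have h1 : c * (k^3 * Nat.choose (n-3) (k-3) * Nat.choose k p)
      = M * Nat.choose (n-3) (k-3) := by rw [hM, hc]; ring
  have h2 : M * Nat.choose (n-3) (k-3) ≤ M * n^(k-3) :=
    Nat.mul_le_mul_left M ((Nat.choose_le_pow _ _).trans
      (Nat.pow_le_pow_left (by omega) _))
  have h3 : M * n^(k-3) < (n-k)^(k-2) := by
    have ha : n ^ (k-3) ≤ 2^(k-3) * (n-k)^(k-3) := by
      rw [← Nat.mul_pow]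
      exact Nat.pow_le_pow_left (by omega) _
    have hb : M * 2^(k-3) < n - k := by
      have : 2^(k-3) ≤ 2^k := Nat.pow_le_pow_right (by norm_num) (by omega)
      have h2' : M * 2^(k-3) < (M+1) * 2^(k-3) :=
        (Nat.mul_lt_mul_right (Nat.pow_pos (by norm_num : 0 < 2))).2 (by omega)
      have h3' : (M+1) * 2^(k-3) ≤ (M+1) * 2^k := Nat.mul_le_mul_left _ this
      have h4' : 2^k * (M+1) + k + 10 ≤ n - k := by omega
      calc M * 2^(k-3) < (M+1) * 2^(k-3) := h2'
        _ ≤ (M+1) * 2^k := h3'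
        _ = 2^k * (M+1) := Nat.mul_comm _ _
        _ ≤ n - k := by omega
    calc M * n^(k-3) ≤ M * (2^(k-3) * (n-k)^(k-3)) := Nat.mul_le_mul_left M ha
      _ = (M * 2^(k-3)) * (n-k)^(k-3) := by ring
      _ < (n-k) * (n-k)^(k-3) :=
          (Nat.mul_lt_mul_right (Nat.pow_pos hnk1)).2 hb
      _ = (n-k)^(k-2) := by
          rw [← Nat.pow_succ']
          congr 1
          omega
  have h4 : (n-k)^(k-2) ≤ c * (Nat.choose (n-1) p * Nat.choose (n-3-p) (k-2-p)) := by
    have e1 : (n-k)^(k-2) = (n-k)^p * (n-k)^(k-2-p) := by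
      rw [← Nat.pow_add]
      congr 1
      omega
    have e2 : (n-k)^p ≤ p.factorial * Nat.choose (n-1) p := by
      have := Nat.pow_sub_le_descFactorial (n-1) p
      rw [Nat.descFactorial_eq_factorial_mul_choose] at this
      refine le_trans (Nat.pow_le_pow_left (show n-k ≤ n-1+1-p by omega) p) this
    have e3 : (n-k)^(k-2-p) ≤ (k-2-p).factorial * Nat.choose (n-3-p) (k-2-p) := by
      have := Nat.pow_sub_le_descFactorial (n-3-p) (k-2-p)
      rw [Nat.descFactorial_eq_factorial_mul_choose] at this
      refine le_trans (Nat.pow_le_pow_left (show n-k ≤ n-3-p+1-(k-2-p) by omega) _) this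
    calc (n-k)^(k-2) = (n-k)^p * (n-k)^(k-2-p) := e1
      _ ≤ (p.factorial * Nat.choose (n-1) p) *
          ((k-2-p).factorial * Nat.choose (n-3-p) (k-2-p)) := Nat.mul_le_mul e2 e3
      _ = c * (Nat.choose (n-1) p * Nat.choose (n-3-p) (k-2-p)) := by rw [hc]; ring
  have h5 : c * (Nat.choose (n-1) p * Nat.choose (n-3-p) (k-2-p)) ≤
      c * (Nat.choose (n-1) p * (Nat.choose (n-3-p) (k-2-p) + 1)) := by
    apply Nat.mul_le_mul_left
    apply Nat.mul_le_mul_left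
    omega
  apply Nat.lt_of_mul_lt_mul_left (a := c)
  omega

lemma branch_lemma (n k : ℕ) (F : Finset (Finset ℕ))
    (hF : F ⊆ (Finset.range n).powersetCard k) (hint : Intersecting F)
    (hn : 0 < n)
    (h1 : ∀ x, ∃ S ∈ F, x ∉ S)
    (h2 : ¬ ∃ x u v, u ≠ v ∧ ∀ S ∈ F, x ∉ S → u ∈ S ∧ v ∈ S) :
    ∃ x < n, ∃ T : Finset (ℕ×ℕ×ℕ), T.card ≤ k*k*k ∧
      ∀ S ∈ F, x ∉ S →
        ∃ c ∈ T, c.1 ∈ S ∧ c.2.1 ∈ S ∧ c.2.2 ∈ S ∧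
          c.1 ≠ c.2.1 ∧ c.1 ≠ c.2.2 ∧ c.2.1 ≠ c.2.2 := by
  classical
  have hcardk : ∀ S ∈ F, S.card = k ∧ S ⊆ Finset.range n := by
    intro S hS
    have := hF hS
    rw [Finset.mem_powersetCard] at this
    exact ⟨this.2, this.1⟩
  have h1' := h1
  -- choice function avoiding a point
  choose g hgF hgx using h1'
  -- choice function avoiding two points
  set W : ℕ → ℕ → Finset ℕ := fun u v =>
    if h : ∃ T ∈ F, u ∉ T ∧ v ∉ T then h.choose else ∅ with hWdef
  have hWcard : ∀ u v, (W u v).card ≤ k := by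
    intro u v
    rw [hWdef]
    by_cases h : ∃ T ∈ F, u ∉ T ∧ v ∉ T
    · simp only [dif_pos h]
      exact le_of_eq (hcardk _ h.choose_spec.1).1
    · simp [dif_neg h]
  have hWspec : ∀ u v, (∃ T ∈ F, u ∉ T ∧ v ∉ T) →
      W u v ∈ F ∧ u ∉ W u v ∧ v ∉ W u v := by
    intro u v h
    rw [hWdef]
    simp only [dif_pos h]
    exact ⟨h.choose_spec.1, h.choose_spec.2.1, h.choose_spec.2.2⟩
  have hk1 : 1 ≤ k := by
    obtain ⟨S', hS', hS'0⟩ := h1 0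
    obtain ⟨y, hy⟩ := hint S' hS' S' hS'
    have hc := (hcardk S' hS').1
    have : S'.Nonempty := ⟨y, (Finset.mem_inter.1 hy).1⟩
    have := Finset.card_pos.2 this
    omega
  by_cases hcov : ∃ a b, a ≠ b ∧ ∀ S ∈ F, a ∈ S ∨ b ∈ S
  · obtain ⟨a, b, hab, habcov⟩ := hcov
    obtain ⟨S₀, hS₀, hbS₀⟩ := h1 b
    have haS₀ : a ∈ S₀ := (habcov S₀ hS₀).resolve_right hbS₀
    have han : a < n := Finset.mem_range.1 ((hcardk S₀ hS₀).2 haS₀)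
    refine ⟨a, han, (g b).biUnion (fun y => (W b y).image (fun z => (b, y, z))), ?_, ?_⟩
    · calc ((g b).biUnion (fun y => (W b y).image (fun z => (b, y, z)))).card
          ≤ ∑ y ∈ g b, ((W b y).image (fun z => (b, y, z))).card :=
            Finset.card_biUnion_le
        _ ≤ (g b).card * k := by
            rw [← smul_eq_mul]
            exact Finset.sum_le_card_nsmul _ _ k
              (fun y _ => Finset.card_image_le.trans (hWcard b y))
        _ = k * k := by rw [(hcardk _ (hgF b)).1]
        _ ≤ k*k*k := by nlinarith
    · intro S hS haS
      have hbS : b ∈ S := (habcov S hS).resolve_left haS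
      obtain ⟨y, hy⟩ := hint S hS (g b) (hgF b)
      rw [Finset.mem_inter] at hy
      have hyb : y ≠ b := fun h => hgx b (h ▸ hy.2)
      have hEx : ∃ T ∈ F, b ∉ T ∧ y ∉ T := by
        by_contra hno
        push_neg at hno
        apply h2
        refine ⟨b, a, y, fun h => haS (h ▸ hy.1), fun S' hS' hbS' => ?_⟩
        exact ⟨(habcov S' hS').resolve_right hbS', hno S' hS' hbS'⟩
      obtain ⟨hWF, hbW, hyW⟩ := hWspec b y hEx
      obtain ⟨z, hz⟩ := hint S hS (W b y) hWF
      rw [Finset.mem_inter] at hz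
      refine ⟨(b, y, z), ?_, hbS, hy.1, hz.1, hyb.symm,
        fun h => hbW ((show b = z from h) ▸ hz.2),
        fun h => hyW ((show y = z from h) ▸ hz.2)⟩
      rw [Finset.mem_biUnion]
      exact ⟨y, hy.2, Finset.mem_image.2 ⟨z, hz.2, rfl⟩⟩
  · push_neg at hcov
    obtain ⟨S₁, hS₁, _⟩ := h1 0
    refine ⟨0, hn, S₁.biUnion (fun x₁ => (g x₁).biUnion
      (fun x₂ => (W x₁ x₂).image (fun x₃ => (x₁, x₂, x₃)))), ?_, ?_⟩
    · calc (S₁.biUnion _).card ≤ ∑ x₁ ∈ S₁, ((g x₁).biUnion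
            (fun x₂ => (W x₁ x₂).image (fun x₃ => (x₁, x₂, x₃)))).card :=
          Finset.card_biUnion_le
        _ ≤ S₁.card * (k * k) := by
            rw [← smul_eq_mul]
            apply Finset.sum_le_card_nsmul
            intro x₁ _
            calc ((g x₁).biUnion (fun x₂ => (W x₁ x₂).image (fun x₃ => (x₁, x₂, x₃)))).card
                ≤ ∑ x₂ ∈ g x₁, ((W x₁ x₂).image (fun x₃ => (x₁, x₂, x₃))).card :=
                  Finset.card_biUnion_le
              _ ≤ (g x₁).card * k := by
                  rw [← smul_eq_mul]
                  exact Finset.sum_le_card_nsmul _ _ k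
                    (fun x₂ _ => Finset.card_image_le.trans (hWcard x₁ x₂))
              _ = k * k := by rw [(hcardk _ (hgF x₁)).1]
        _ = k*k*k := by rw [(hcardk _ hS₁).1]; ring
    · intro S hS _
      obtain ⟨x₁, hx₁⟩ := hint S hS S₁ hS₁
      rw [Finset.mem_inter] at hx₁
      obtain ⟨x₂, hx₂⟩ := hint S hS (g x₁) (hgF x₁)
      rw [Finset.mem_inter] at hx₂
      have h12 : x₁ ≠ x₂ := fun h => hgx x₁ (h ▸ hx₂.2)
      obtain ⟨hWF, h1W, h2W⟩ := hWspec x₁ x₂ (hcov x₁ x₂ h12)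
      obtain ⟨x₃, hx₃⟩ := hint S hS (W x₁ x₂) hWF
      rw [Finset.mem_inter] at hx₃
      refine ⟨(x₁, x₂, x₃), ?_, hx₁.1, hx₂.1, hx₃.1, h12,
        fun h => h1W ((show x₁ = x₃ from h) ▸ hx₃.2),
        fun h => h2W ((show x₂ = x₃ from h) ▸ hx₃.2)⟩
      rw [Finset.mem_biUnion]
      exact ⟨x₁, hx₁.2, Finset.mem_biUnion.2 ⟨x₂, hx₂.2,
        Finset.mem_image.2 ⟨x₃, hx₃.2, rfl⟩⟩⟩

lemma beta_le_card (n p : ℕ) (F : Finset (Finset ℕ)) (A : Finset ℕ) (x : ℕ)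
    (hA : A ⊆ Finset.range n) (hx : x < n) (hxA : x ∉ A) (hAp : A.card = p) :
    beta n p 1 F ≤ (famAB F A {x}).card :=
  Nat.sInf_le ⟨A, {x}, hA,
    by simp [Finset.singleton_subset_iff, Finset.mem_range, hx],
    Finset.disjoint_singleton_right.2 hxA, hAp, Finset.card_singleton x, rfl⟩

/-- For k ≥ p + 2 and all large n, every intersecting F ⊆ binom([n],k) satisfies
β_{p,1}(F) ≤ binom(n-3-p, k-2-p). -/
theorem beta_p_one_upper (p k : ℕ) (hk : p + 2 ≤ k) :
    ∃ n₀ : ℕ, ∀ n ≥ n₀, ∀ F : Finset (Finset ℕ),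
      F ⊆ (Finset.range n).powersetCard k → Intersecting F →
      beta n p 1 F ≤ Nat.choose (n - 3 - p) (k - 2 - p) := by
  classical
  refine ⟨2^k * (k^3 * Nat.choose k p * p.factorial * (k-2-p).factorial + 1)
    + 2*k + p + 10, ?_⟩
  intro n hn F hF hint
  have hnp : p + 3 ≤ n := by omega
  have hn0 : 0 < n := by omega
  have hcardk : ∀ S ∈ F, S.card = k ∧ S ⊆ Finset.range n := by
    intro S hS
    have := hF hS
    rw [Finset.mem_powersetCard] at this
    exact ⟨this.2, this.1⟩
  rcases Finset.eq_empty_or_nonempty F with hFe | hFne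
  · obtain ⟨A, hA, hAc⟩ := Finset.exists_subset_card_eq (s := Finset.range n \ {0}) (n := p)
      (by rw [card_sdiff_of_subset (by simp [hn0]), card_range, card_singleton]; omega)
    have hb := beta_le_card n p F A 0 (hA.trans sdiff_subset) hn0
      (fun h => by simpa using hA h) hAc
    have : famAB F A {0} = ∅ := by rw [hFe]; rfl
    rw [this] at hb
    exact le_trans hb (by simp)
  · by_cases hall : ∃ x, ∀ S ∈ F, x ∈ S
    · obtain ⟨x, hx⟩ := hall
      obtain ⟨S₀, hS₀⟩ := hFne
      have hxn : x < n := Finset.mem_range.1 ((hcardk S₀ hS₀).2 (hx S₀ hS₀))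
      obtain ⟨A, hA, hAc⟩ := Finset.exists_subset_card_eq (s := Finset.range n \ {x}) (n := p)
        (by rw [card_sdiff_of_subset (by simp [mem_range, hxn]), card_range, card_singleton]; omega)
      have hb := beta_le_card n p F A x (hA.trans sdiff_subset) hxn
        (fun h => by simpa using hA h) hAc
      have : famAB F A {x} = ∅ := by
        apply Finset.filter_eq_empty_iff.2
        rintro S hS ⟨-, hd⟩
        exact (Finset.disjoint_singleton_left.1 hd) (hx S hS)
      rw [this] at hb
      exact le_trans hb (by simp)
    · push_neg at hall
      by_cases h2c : ∃ x u v, u ≠ v ∧ ∀ S ∈ F, x ∉ S → u ∈ S ∧ v ∈ S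
      · -- CASE A : two 2-covers share a point
        obtain ⟨x, u, v, huv, hforce⟩ := h2c
        obtain ⟨S₂, hS₂, hxS₂⟩ := hall x
        obtain ⟨hu2, hv2⟩ := hforce S₂ hS₂ hxS₂
        have hun : u < n := Finset.mem_range.1 ((hcardk _ hS₂).2 hu2)
        have hvn : v < n := Finset.mem_range.1 ((hcardk _ hS₂).2 hv2)
        have hxu : x ≠ u := fun h => hxS₂ (h ▸ hu2)
        have hxv : x ≠ v := fun h => hxS₂ (h ▸ hv2)
        have hxn : x < n := by
          obtain ⟨S₃, hS₃, huS₃⟩ := hall u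
          by_contra hxn
          have hxS₃ : x ∉ S₃ := fun h => hxn (Finset.mem_range.1 ((hcardk _ hS₃).2 h))
          exact huS₃ (hforce S₃ hS₃ hxS₃).1
        have hsub : ({x, u, v} : Finset ℕ) ⊆ Finset.range n := by
          simp [insert_subset_iff, mem_range, hxn, hun, hvn]
        have hc3 : ({x, u, v} : Finset ℕ).card = 3 := by
          rw [card_insert_of_notMem (by simp [hxu, hxv]),
              card_insert_of_notMem (by simp [huv]), card_singleton]
        obtain ⟨A, hA, hAc⟩ := Finset.exists_subset_card_eq (s := Finset.range n \ {x, u, v}) (n := p)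
          (by rw [card_sdiff_of_subset hsub, card_range, hc3]; omega)
        have hAr : A ⊆ Finset.range n := hA.trans sdiff_subset
        have hxA : x ∉ A := fun h => by simpa using (Finset.mem_sdiff.1 (hA h)).2
        have huA : u ∉ A := fun h => by simpa using (Finset.mem_sdiff.1 (hA h)).2
        have hvA : v ∉ A := fun h => by simpa using (Finset.mem_sdiff.1 (hA h)).2
        refine (beta_le_card n p F A x hAr hxn hxA hAc).trans ?_
        set s := Finset.range n \ {x} with hs
        set t := insert u (insert v A) with ht
        have hsubset : famAB F A {x} ⊆ (s.powersetCard k).filter (fun S => t ⊆ S) := by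
          intro S hS
          simp only [famAB, Finset.mem_filter] at hS
          obtain ⟨hSF, hAS, hdisj⟩ := hS
          have hxS : x ∉ S := Finset.disjoint_singleton_left.1 hdisj
          obtain ⟨hSk, hSr⟩ := hcardk S hSF
          rw [Finset.mem_filter, Finset.mem_powersetCard]
          refine ⟨⟨fun y hy => Finset.mem_sdiff.2 ⟨hSr hy, by
            simp only [Finset.mem_singleton]; rintro rfl; exact hxS hy⟩, hSk⟩, ?_⟩
          obtain ⟨huS, hvS⟩ := hforce S hSF hxS
          exact Finset.insert_subset huS (Finset.insert_subset hvS hAS)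
        have hts : t.card = p + 2 := by
          rw [ht, card_insert_of_notMem (by simp [huv, huA]),
            card_insert_of_notMem hvA, hAc]
        have hsc : s.card = n - 1 := by
          rw [hs, card_sdiff_of_subset (by simp [mem_range, hxn]), card_range, card_singleton]
        calc (famAB F A {x}).card
            ≤ ((s.powersetCard k).filter (fun S => t ⊆ S)).card :=
              Finset.card_le_card hsubset
          _ ≤ Nat.choose (s.card - t.card) (k - t.card) := card_filter_superset_le s t k
          _ = Nat.choose (n-3-p) (k-2-p) := by
              rw [hsc, hts]
              congr 1 <;> omega
      · -- CASE B
        obtain ⟨x, hxn, T, hTcard, htriple⟩ := branch_lemma n k F hF hint hn0 hall h2c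
        set F₀ := F.filter (fun S => x ∉ S) with hF₀
        set part : ℕ×ℕ×ℕ → Finset (Finset ℕ) := fun c =>
          ((Finset.range n).powersetCard k).filter
            (fun S => c.1 ∈ S ∧ c.2.1 ∈ S ∧ c.2.2 ∈ S ∧
              c.1 ≠ c.2.1 ∧ c.1 ≠ c.2.2 ∧ c.2.1 ≠ c.2.2) with hpartdef
    
        have hpart : ∀ c, (part c).card ≤ Nat.choose (n-3) (k-3) := by
          intro c
          by_cases hd : c.1 ≠ c.2.1 ∧ c.1 ≠ c.2.2 ∧ c.2.1 ≠ c.2.2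
          · have hsub2 : part c ⊆ ((Finset.range n).powersetCard k).filter
                (fun S => ({c.1, c.2.1, c.2.2} : Finset ℕ) ⊆ S) := by
              intro S hS
              simp only [hpartdef, Finset.mem_filter] at hS ⊢
              refine ⟨hS.1, ?_⟩
              intro y hy
              simp only [Finset.mem_insert, Finset.mem_singleton] at hy
              rcases hy with rfl | rfl | rfl
              exacts [hS.2.1, hS.2.2.1, hS.2.2.2.1]
            refine (Finset.card_le_card hsub2).trans ?_
            refine (card_filter_superset_le _ _ _).trans ?_
            have h3 : ({c.1, c.2.1, c.2.2} : Finset ℕ).card = 3 := by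
              rw [card_insert_of_notMem (by simp [hd.1, hd.2.1]),
                  card_insert_of_notMem (by simp [hd.2.2]), card_singleton]
            rw [h3, Finset.card_range]
          · have : part c = ∅ := Finset.filter_eq_empty_iff.2 (fun S _ => by tauto)
            simp [this]
        have hF₀sub : F₀ ⊆ T.biUnion part := by
          intro S hS
          rw [hF₀, Finset.mem_filter] at hS
          obtain ⟨c, hcT, hc⟩ := htriple S hS.1 hS.2
          rw [Finset.mem_biUnion]
          exact ⟨c, hcT, Finset.mem_filter.2 ⟨hF hS.1, hc⟩⟩
        have hF₀card : F₀.card ≤ (k*k*k) * Nat.choose (n-3) (k-3) := by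
          calc F₀.card ≤ (T.biUnion part).card := Finset.card_le_card hF₀sub
            _ ≤ ∑ c ∈ T, (part c).card := Finset.card_biUnion_le
            _ ≤ T.card * Nat.choose (n-3) (k-3) := by
                rw [← smul_eq_mul]
                exact Finset.sum_le_card_nsmul _ _ _ (fun c _ => hpart c)
            _ ≤ (k*k*k) * Nat.choose (n-3) (k-3) :=
                Nat.mul_le_mul_right _ hTcard
        by_cases hk3 : 3 ≤ k
        · -- averaging over A
          set 𝒜 := (Finset.range n \ {x}).powersetCard p with h𝒜
          have h𝒜card : 𝒜.card = Nat.choose (n-1) p := by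
            rw [h𝒜, Finset.card_powersetCard,
              card_sdiff_of_subset (by simp [mem_range, hxn]), card_range, card_singleton]
          have h𝒜ne : 𝒜.Nonempty := by
            rw [← Finset.card_pos, h𝒜card]
            exact Nat.choose_pos (by omega)
          obtain ⟨A₀, hA₀, hmin⟩ :=
            Finset.exists_min_image 𝒜 (fun A => (famAB F A {x}).card) h𝒜ne
          have hfam : ∀ A : Finset ℕ, famAB F A {x} = F₀.filter (fun S => A ⊆ S) := by
            intro A
            rw [famAB, hF₀, Finset.filter_filter]
            apply Finset.filter_congr
            intro S _
            simp [Finset.disjoint_singleton_left, and_comm]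
          have hsum : ∑ A ∈ 𝒜, (famAB F A {x}).card ≤ F₀.card * Nat.choose k p := by
            have e1 : ∑ A ∈ 𝒜, (famAB F A {x}).card
                = ∑ S ∈ F₀, (𝒜.filter (fun A => A ⊆ S)).card := by
              simp_rw [hfam, Finset.card_filter]
              exact Finset.sum_comm
            rw [e1, ← smul_eq_mul]
            apply Finset.sum_le_card_nsmul
            intro S hS
            have hSk : S.card = k := (hcardk S (Finset.mem_filter.1 hS).1).1
            have hsub3 : 𝒜.filter (fun A => A ⊆ S) ⊆ S.powersetCard p := by
              intro A hA
              rw [Finset.mem_filter, h𝒜, Finset.mem_powersetCard] at hA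
              exact Finset.mem_powersetCard.2 ⟨hA.2, hA.1.2⟩
            calc (𝒜.filter (fun A => A ⊆ S)).card ≤ (S.powersetCard p).card :=
                Finset.card_le_card hsub3
              _ = Nat.choose k p := by rw [Finset.card_powersetCard, hSk]
          have hlow : 𝒜.card * (famAB F A₀ {x}).card ≤
              ∑ A ∈ 𝒜, (famAB F A {x}).card := by
            rw [← smul_eq_mul]
            exact Finset.card_nsmul_le_sum 𝒜 _ _ (fun A hA => hmin A hA)
          have harith := arith_D p k hk hk3 n hn
          have hchain : Nat.choose (n-1) p * (famAB F A₀ {x}).card <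
              Nat.choose (n-1) p * (Nat.choose (n-3-p) (k-2-p) + 1) := by
            calc Nat.choose (n-1) p * (famAB F A₀ {x}).card
                = 𝒜.card * (famAB F A₀ {x}).card := by rw [h𝒜card]
              _ ≤ ∑ A ∈ 𝒜, (famAB F A {x}).card := hlow
              _ ≤ F₀.card * Nat.choose k p := hsum
              _ ≤ (k*k*k) * Nat.choose (n-3) (k-3) * Nat.choose k p :=
                  Nat.mul_le_mul_right _ hF₀card
              _ = k^3 * Nat.choose (n-3) (k-3) * Nat.choose k p := by ring
              _ < Nat.choose (n-1) p * (Nat.choose (n-3-p) (k-2-p) + 1) := harith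
          have hfin : (famAB F A₀ {x}).card ≤ Nat.choose (n-3-p) (k-2-p) :=
            Nat.lt_succ_iff.1 (Nat.lt_of_mul_lt_mul_left hchain)
          rw [h𝒜, Finset.mem_powersetCard] at hA₀
          exact (beta_le_card n p F A₀ x (hA₀.1.trans sdiff_subset) hxn
            (fun h => by simpa using (Finset.mem_sdiff.1 (hA₀.1 h)).2) hA₀.2).trans hfin
        · -- k = 2, p = 0
          have hk2 : k = 2 := by omega
          have hp0 : p = 0 := by omega
          have hF₀e : F₀ = ∅ := by
            rw [Finset.eq_empty_iff_forall_notMem]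
            intro S hS
            rw [hF₀, Finset.mem_filter] at hS
            obtain ⟨c, hcT, h1c, h2cc, h3c, hd1, hd2, hd3⟩ := htriple S hS.1 hS.2
            have hsub3 : ({c.1, c.2.1, c.2.2} : Finset ℕ) ⊆ S := by
              intro y hy
              simp only [Finset.mem_insert, Finset.mem_singleton] at hy
              rcases hy with rfl | rfl | rfl
              exacts [h1c, h2cc, h3c]
            have h3card : ({c.1, c.2.1, c.2.2} : Finset ℕ).card = 3 := by
              rw [card_insert_of_notMem (by simp [hd1, hd2]),
                  card_insert_of_notMem (by simp [hd3]), card_singleton]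
            have hle := Finset.card_le_card hsub3
            rw [h3card, (hcardk S hS.1).1] at hle
            omega
          subst hp0
          have hb := beta_le_card n 0 F ∅ x (by simp) hxn (by simp) rfl
          have hsub4 : famAB F ∅ {x} ⊆ F₀ := by
            intro S hS
            simp only [famAB, Finset.mem_filter] at hS
            exact Finset.mem_filter.2 ⟨hS.1, Finset.disjoint_singleton_left.1 hS.2.2⟩
          rw [hF₀e] at hsub4
          have h0 : (famAB F ∅ {x}).card = 0 := by
            rw [Finset.card_eq_zero]
            exact Finset.subset_empty.1 hsub4
          rw [h0] at hb
          exact hb.trans (Nat.zero_le _)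
end
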